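/- arXiv:1111.6278 — 9 statements merged into one kernel-verified Lean document; each statement's English description precedes it below -/
import Mathlib

section
/- Let G be a connected simple graph with n vertices and s ≥ 2 edges. If G is bipartite, then the kernel of the group homomorphism θ : (K^*)^n → (K^*)^s has order q−1. If G is non-bipartite, then the kernel of θ has order 2 when q is odd, and θ is injective when q is even. -/
open MvPolynomial

noncomputable section

/-- For `x : Fin n → M` and an edge `E = {j,k}` (as an element of `Sym2 (Fin n)`),
`edgeProd x E = x j * x k`. -/
def edgeProd {M : Type} [CommMonoid M] {n : ℕ} (x : Fin n → M) (E : Sym2 (Fin n)) : M :=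
  Sym2.lift ⟨fun a b => x a * x b, fun a b => mul_comm (x a) (x b)⟩ E

lemma sym2_rep {α : Type*} (z : Sym2 α) : ∃ a b, z = s(a, b) :=
  Sym2.inductionOn z fun a b => ⟨a, b, rfl⟩

lemma fin2_iff : ∀ a b c : Fin 2, b ≠ c → (a = c ↔ a ≠ b) := by decide

lemma walk_parity {V : Type*} {G : SimpleGraph V} {M : Type*} [CommGroup M]
    {x : V → M} (h : ∀ v w, G.Adj v w → x v * x w = 1)
    {u v : V} (p : G.Walk u v) :
    x v = if Even p.length then x u else (x u)⁻¹ := by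
  induction p with
  | nil => simp
  | @cons a b c hadj p ih =>
    have hb : x b = (x a)⁻¹ := eq_inv_of_mul_eq_one_left (by rw [mul_comm]; exact h a b hadj)
    rw [ih, hb]
    by_cases hp : Even p.length <;>
      simp [hp, Nat.even_add_one, SimpleGraph.Walk.length_cons]

lemma coloring_walk_parity {V : Type*} {G : SimpleGraph V} (C : G.Coloring (Fin 2))
    {u v : V} (p : G.Walk u v) : C v = C u ↔ Even p.length := by
  induction p with
  | nil => simp
  | @cons a b c hadj p ih =>
    have hab : C a ≠ C b := C.valid hadj
    rw [SimpleGraph.Walk.length_cons, Nat.even_add_one, ← ih,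
      fin2_iff (C c) (C b) (C a) (Ne.symm hab)]

lemma exists_odd_closed_walk {V : Type*} {G : SimpleGraph V} (hconn : G.Preconnected)
    (hnb : ¬ G.Colorable 2) (v0 : V) : ∃ p : G.Walk v0 v0, Odd p.length := by
  classical
  by_contra h
  push_neg at h
  apply hnb
  refine ⟨SimpleGraph.Coloring.mk
    (fun v => if Even ((hconn v0 v).some.length : ℕ) then 0 else 1) ?_⟩
  intro v w hadj hcvw
  set p := (hconn v0 v).some with hp
  set r := (hconn v0 w).some with hr
  have hpar : Even p.length ↔ Even r.length := by
    by_cases h1 : Even p.length <;> by_cases h2 : Even r.length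
    · exact iff_of_true h1 h2
    · simp only [if_pos h1, if_neg h2] at hcvw; exact absurd hcvw (by decide)
    · simp only [if_neg h1, if_pos h2] at hcvw; exact absurd hcvw (by decide)
    · exact iff_of_false h1 h2
  have hlen : ((p.concat hadj).append r.reverse).length = p.length + 1 + r.length := by
    simp [SimpleGraph.Walk.length_append, SimpleGraph.Walk.length_concat]
  have := h ((p.concat hadj).append r.reverse)
  rw [hlen] at this
  rcases Nat.even_or_odd p.length with h1 | h1
  · have h2 := hpar.mp h1
    exact this (by rcases h1 with ⟨k, hk⟩; rcases h2 with ⟨l, hl⟩; exact ⟨k + l, by omega⟩)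
  · have h2 : ¬ Even r.length := fun h2 => (Nat.not_even_iff_odd.mpr h1) (hpar.mpr h2)
    rw [Nat.not_even_iff_odd] at h2
    exact this (by rcases h1 with ⟨k, hk⟩; rcases h2 with ⟨l, hl⟩; exact ⟨k + l + 1, by omega⟩)

/-- Let `G` be a connected simple graph with `n` vertices and `s ≥ 2` edges
(edges enumerated injectively by `e : Fin s → Sym2 (Fin n)`, none of them loops, and with
no isolated vertices), over a finite field `K` with `q > 2` elements.  Let
`θ : (Kˣ)ⁿ → (Kˣ)ˢ` be `x ↦ (xᵉ¹, …, xᵉˢ)`.  If `G` is bipartite then the kernel of `θ`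
has order `q − 1`; if `G` is non-bipartite then the kernel has order `2` when `q` is odd
and `θ` is injective when `q` is even. -/
theorem kernel_of_theta_order
    (q n s : ℕ) (hq : 2 < q) (K : Type) [Field K] [Fintype K]
    (hcard : Fintype.card K = q) (hs : 2 ≤ s)
    (e : Fin s → Sym2 (Fin n)) (he : Function.Injective e)
    (hnd : ∀ i, ¬ (e i).IsDiag)
    (hiso : ∀ v : Fin n, ∃ i, v ∈ e i)
    (hconn : (SimpleGraph.fromEdgeSet (Set.range e)).Connected) :
    ((SimpleGraph.fromEdgeSet (Set.range e)).Colorable 2 →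
        Nat.card {x : Fin n → Kˣ // ∀ i, edgeProd x (e i) = 1} = q - 1) ∧
    (¬ (SimpleGraph.fromEdgeSet (Set.range e)).Colorable 2 →
        (Odd q → Nat.card {x : Fin n → Kˣ // ∀ i, edgeProd x (e i) = 1} = 2) ∧
        (Even q →
          Function.Injective fun (x : Fin n → Kˣ) => fun i : Fin s => edgeProd x (e i))) := by
  classical
  set G := SimpleGraph.fromEdgeSet (Set.range e) with hG
  haveI : Nonempty (Fin n) := hconn.nonempty
  set v0 : Fin n := Classical.arbitrary (Fin n) with hv0
  -- edge adjacency
  have hadje : ∀ i v w, e i = s(v, w) → G.Adj v w := by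
    intro i v w hvw
    have hne : v ≠ w := by
      intro hvweq
      exact hnd i (by rw [hvw, hvweq]; exact Sym2.mk_isDiag_iff.mpr rfl)
    exact (SimpleGraph.fromEdgeSet_adj _).mpr ⟨⟨i, hvw⟩, hne⟩
  -- kernel elements satisfy edge relation for all adjacencies
  have hker : ∀ (x : Fin n → Kˣ), (∀ i, edgeProd x (e i) = 1) →
      ∀ v w, G.Adj v w → x v * x w = 1 := by
    intro x hx v w hvw
    obtain ⟨⟨i, hi⟩, -⟩ := (SimpleGraph.fromEdgeSet_adj _).mp hvw
    have := hx i
    rw [hi] at this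
    simpa [edgeProd] using this
  -- value along walks
  have hwalk : ∀ (x : Fin n → Kˣ), (∀ i, edgeProd x (e i) = 1) →
      ∀ v : Fin n, ∀ p : G.Walk v0 v, x v = if Even p.length then x v0 else (x v0)⁻¹ :=
    fun x hx v p => walk_parity (hker x hx) p
  constructor
  · -- bipartite case
    intro hcol
    obtain ⟨C⟩ := hcol
    have hEquiv : Nat.card {x : Fin n → Kˣ // ∀ i, edgeProd x (e i) = 1} = Nat.card Kˣ := by
      refine Nat.card_congr ⟨fun x => x.1 v0,
        fun a => ⟨fun v => if C v = C v0 then a else a⁻¹, ?_⟩, ?_, ?_⟩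
      · intro i
        obtain ⟨v, w, hvw⟩ := sym2_rep (e i)
        have hadj := hadje i v w hvw
        have hcc : C v ≠ C w := C.valid hadj
        have hone : (C v = C v0) ↔ ¬ (C w = C v0) := fin2_iff (C v0) (C v) (C w) hcc |>.symm
          |> fun h => by
            constructor
            · intro h1 h2; exact hcc (h1.trans h2.symm)
            · intro h2
              have : C v = C v0 ∨ C w = C v0 := by
                rcases Fin.exists_fin_two.mp ⟨C v0, rfl⟩ with _ | _ <;> omega
              tauto
        rw [hvw]
        simp only [edgeProd, Sym2.lift_mk]
        by_cases h1 : C v = C v0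
        · rw [if_pos h1, if_neg (hone.mp h1), mul_inv_cancel]
        · rw [if_neg h1, if_pos (not_not.mp (fun h2 => h1 (hone.mpr h2))), inv_mul_cancel]
      · intro x
        ext v
        obtain ⟨p⟩ := hconn.preconnected v0 v
        have h1 := hwalk x.1 x.2 v p
        have h2 := coloring_walk_parity C p
        by_cases hp : Even p.length
        · simp [h1, if_pos hp, if_pos (h2.mpr hp)]
        · simp [h1, if_neg hp, if_neg (fun h => hp (h2.mp h))]
      · intro a
        simp
    rw [hEquiv, Nat.card_eq_fintype_card, Fintype.card_units, hcard]
  · -- non-bipartite case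
    intro hncol
    obtain ⟨w0, hw0⟩ := exists_odd_closed_walk hconn.preconnected hncol v0
    -- kernel elements are constant with square one
    have hsq : ∀ (x : Fin n → Kˣ), (∀ i, edgeProd x (e i) = 1) → (x v0) ^ 2 = 1 := by
      intro x hx
      have h1 := hwalk x hx v0 w0
      rw [if_neg (Nat.not_even_iff_odd.mpr hw0)] at h1
      rw [sq]
      nth_rewrite 2 [h1]
      simp
    have hconst : ∀ (x : Fin n → Kˣ), (∀ i, edgeProd x (e i) = 1) → ∀ v, x v = x v0 := by
      intro x hx v
      obtain ⟨p⟩ := hconn.preconnected v0 v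
      have h1 := hwalk x hx v p
      have h2 : (x v0)⁻¹ = x v0 := by
        have := hsq x hx
        rw [sq] at this
        exact inv_eq_of_mul_eq_one_right this
      rw [h1]; split <;> simp [h2]
    have hmem : ∀ a : Kˣ, a ^ 2 = 1 → ∀ i, edgeProd (fun _ => a) (e i) = 1 := by
      intro a ha i
      obtain ⟨v, w, hvw⟩ := sym2_rep (e i)
      rw [hvw]
      simpa [edgeProd, ← sq] using ha
    have hEquiv : Nat.card {x : Fin n → Kˣ // ∀ i, edgeProd x (e i) = 1}
        = Nat.card {a : Kˣ // a ^ 2 = 1} := by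
      refine Nat.card_congr ⟨fun x => ⟨x.1 v0, hsq x.1 x.2⟩,
        fun a => ⟨fun _ => a.1, hmem a.1 a.2⟩, ?_, ?_⟩
      · intro x; exact Subtype.ext (funext fun v => (hconst x.1 x.2 v).symm)
      · intro a; rfl
    have hcases : ∀ a : Kˣ, a ^ 2 = 1 ↔ a = 1 ∨ a = -1 := by
      intro a
      rw [sq]
      constructor
      · intro h
        have : (a : K) * (a : K) = 1 := by
          have := congrArg (Units.val) h; push_cast at this; simpa using this
        rcases mul_self_eq_one_iff.mp this with h1 | h1
        · left; exact Units.ext (by simpa using h1)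
        · right; exact Units.ext (by simpa using h1)
      · rintro (rfl | rfl) <;> simp
    constructor
    · -- odd q
      intro hodd
      have hchar : ringChar K ≠ 2 := by
        intro h2
        have := FiniteField.even_card_of_char_two h2
        rw [hcard] at this
        rw [Nat.odd_iff] at hodd
        omega
      have hne : (1 : Kˣ) ≠ -1 := by
        intro h1
        apply hchar
        have h2 : (1 : K) = -1 := by
          have := congrArg (Units.val) h1; simpa using this
        have h3 : (2 : K) = 0 := by linear_combination h2
        have h4 : ringChar K ∣ 2 := (ringChar.spec K 2).mp (by exact_mod_cast h3)
        haveI := ringChar.charP K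
        have h5 : (ringChar K).Prime := CharP.char_is_prime K (ringChar K)
        exact ((Nat.prime_dvd_prime_iff_eq h5 Nat.prime_two).mp h4)
      rw [hEquiv]
      have : Nat.card {a : Kˣ // a ^ 2 = 1} = Nat.card ({1, -1} : Set Kˣ) := by
        refine Nat.card_congr (Equiv.subtypeEquivRight fun a => ?_)
        rw [hcases a]; simp
      rw [this, Nat.card_coe_set_eq, Set.ncard_pair hne]
    · -- even q
      intro heven x y hxy
      have hx : ∀ i, edgeProd x (e i) = edgeProd y (e i) := fun i => congrFun hxy i
      have hzk : ∀ i, edgeProd (fun v => x v * (y v)⁻¹) (e i) = 1 := by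
        intro i
        obtain ⟨v, w, hvw⟩ := sym2_rep (e i)
        have hxi := hx i
        rw [hvw] at hxi ⊢
        simp only [edgeProd, Sym2.lift_mk] at hxi ⊢
        have hre : (x v * (y v)⁻¹) * (x w * (y w)⁻¹) = (x v * x w) * (y v * y w)⁻¹ := by
          rw [mul_inv, mul_mul_mul_comm]
        rw [hre]
        exact mul_inv_eq_one.mpr hxi
      have hchar : ringChar K = 2 := by
        apply FiniteField.even_card_iff_char_two.mpr
        rw [hcard]
        rcases heven with ⟨k, hk⟩
        omega
      have hne : (-1 : Kˣ) = 1 := by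
        apply Units.ext
        simp only [Units.val_neg, Units.val_one]
        haveI : CharP K 2 := ringChar.of_eq hchar
        exact CharTwo.neg_eq 1
      have hz1 : (fun v => x v * (y v)⁻¹) v0 = 1 := by
        show x v0 * (y v0)⁻¹ = 1
        rcases (hcases _).mp (hsq _ hzk) with h | h
        · exact h
        · rw [h, hne]
      funext v
      have hv : x v * (y v)⁻¹ = 1 := (hconst _ hzk v).trans hz1
      exact mul_inv_eq_one.mp hv
end
end

section
/- Let G be a connected simple graph with s ≥ 2 edges. Then the order of the subgroup X^* ∩ Λ of (K^*)^s (which is the kernel of the restriction to X^* of the quotient homomorphism (K^*)^s → (K^*)^s/Λ) equals: (q−1)/2 if G is non-bipartite and q is odd; q−1 if G is non-bipartite and q is even; and q−1 if G is bipartite. -/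
open MvPolynomial

noncomputable section

/-- The diagonal subgroup `Λ = {(λ,…,λ) : λ ∈ Kˣ}` of `(Kˣ)ˢ`. -/
def diagSubgroup (K : Type) [Field K] (s : ℕ) : Subgroup (Fin s → Kˣ) where
  carrier := {y | ∃ l : Kˣ, y = fun _ => l}
  one_mem' := ⟨1, rfl⟩
  mul_mem' := by rintro _ _ ⟨a, rfl⟩ ⟨b, rfl⟩; exact ⟨a * b, rfl⟩
  inv_mem' := by rintro _ ⟨a, rfl⟩; exact ⟨a⁻¹, rfl⟩

lemma edgeProd_mk {M : Type} [CommMonoid M] {n : ℕ} (x : Fin n → M) (a b : Fin n) :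
    edgeProd x s(a, b) = x a * x b := rfl

lemma units_isSquare_iff {K : Type} [Field K] (u : Kˣ) :
    IsSquare u ↔ IsSquare (u : K) := by
  constructor
  · rintro ⟨r, rfl⟩; exact ⟨r, by push_cast; ring⟩
  · rintro ⟨r, hr⟩
    have hr0 : r ≠ 0 := by rintro rfl; exact u.ne_zero (by simpa using hr)
    exact ⟨Units.mk0 r hr0, Units.ext (by simpa using hr)⟩

lemma nonsq_mul {K : Type} [Field K] [Fintype K] {u v : Kˣ}
    (hu : ¬ IsSquare u) (hv : ¬ IsSquare v) : IsSquare (u * v) := by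
  classical
  rw [units_isSquare_iff] at hu hv ⊢
  have h1 : quadraticChar K (u : K) = -1 :=
    (quadraticChar_neg_one_iff_not_isSquare).2 hu
  have h2 : quadraticChar K (v : K) = -1 :=
    (quadraticChar_neg_one_iff_not_isSquare).2 hv
  have : quadraticChar K ((u : K) * v) = 1 := by
    rw [map_mul, h1, h2]; ring
  have := (quadraticChar_one_iff_isSquare (by simp [Units.ne_zero] : ((u : K) * v) ≠ 0)).1 this
  simpa using this

lemma card_sq_units {K : Type} [Field K] [Fintype K] (hodd : Odd (Fintype.card K)) :
    Nat.card {l : Kˣ // IsSquare l} = (Fintype.card K - 1) / 2 := by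
  classical
  set f : Kˣ →* Kˣ := powMonoidHom 2 with hf
  have hrange : ∀ l : Kˣ, IsSquare l ↔ l ∈ f.range := by
    intro l
    simp [f, MonoidHom.mem_range, powMonoidHom_apply, IsSquare, pow_two, eq_comm]
  have hcardeq : Nat.card {l : Kˣ // IsSquare l} = Nat.card f.range :=
    Nat.card_congr (Equiv.subtypeEquivRight hrange)
  have hker : (f.ker : Set Kˣ) = {1, -1} := by
    ext x
    simp only [SetLike.mem_coe, MonoidHom.mem_ker, f, powMonoidHom_apply]
    constructor
    · intro hx
      have : (x : K) ^ 2 = 1 := by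
        have := congrArg (Units.val) hx; push_cast at this; simpa using this
      rcases sq_eq_one_iff.mp this with h | h
      · left; exact Units.ext (by simpa using h)
      · right; exact Units.ext (by simpa using h)
    · rintro (rfl | rfl) <;> simp [pow_two]
  have hne : (-1 : Kˣ) ≠ 1 := by
    intro h
    have h2 : ringChar K ≠ 2 := by
      intro hc
      have h3 := FiniteField.even_card_of_char_two hc
      obtain ⟨k, hk⟩ := hodd
      omega
    exact (Ring.neg_one_ne_one_of_char_ne_two h2) (by
      have := congrArg (Units.val) h; push_cast at this; simpa using this)
  have hkcard : Nat.card f.ker = 2 := by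
    have h4 : Nat.card ((f.ker : Set Kˣ)) = ({1, -1} : Set Kˣ).ncard := by
      rw [hker, Nat.card_coe_set_eq]
    rw [Set.ncard_pair (Ne.symm hne)] at h4
    exact h4
  have htot : Nat.card Kˣ = Nat.card (Kˣ ⧸ f.ker) * Nat.card f.ker :=
    Subgroup.card_eq_card_quotient_mul_card_subgroup f.ker
  have hq : Nat.card (Kˣ ⧸ f.ker) = Nat.card f.range :=
    Nat.card_congr (QuotientGroup.quotientKerEquivRange f).toEquiv
  have hu : Nat.card Kˣ = Fintype.card K - 1 := by
    rw [Nat.card_eq_fintype_card, Fintype.card_units]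
  rw [hq, hkcard, hu] at htot
  have hpos : 0 < Fintype.card K := Fintype.card_pos
  rw [hcardeq, ← hq]
  omega

/-- Let `G` be a connected simple graph with `s ≥ 2` edges, over a finite
field `K` with `q > 2` elements, `X* = θ((Kˣ)ⁿ)` and `Λ` the diagonal subgroup of `(Kˣ)ˢ`.
Then the order of `X* ∩ Λ` (the kernel of the restriction to `X*` of the quotient map
`(Kˣ)ˢ → (Kˣ)ˢ/Λ`) is `(q−1)/2` if `G` is non-bipartite and `q` odd, `q−1` if `G` is
non-bipartite and `q` is even, and `q−1` if `G` is bipartite. -/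
theorem order_of_Xstar_inter_diag
    (q n s : ℕ) (hq : 2 < q) (K : Type) [Field K] [Fintype K]
    (hcard : Fintype.card K = q) (hs : 2 ≤ s)
    (e : Fin s → Sym2 (Fin n)) (he : Function.Injective e)
    (hnd : ∀ i, ¬ (e i).IsDiag)
    (hiso : ∀ v : Fin n, ∃ i, v ∈ e i)
    (hconn : (SimpleGraph.fromEdgeSet (Set.range e)).Connected) :
    (¬ (SimpleGraph.fromEdgeSet (Set.range e)).Colorable 2 →
        (Odd q → Nat.card {y : Fin s → Kˣ //
            (y ∈ Set.range fun (x : Fin n → Kˣ) (i : Fin s) => edgeProd x (e i)) ∧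
            y ∈ diagSubgroup K s} = (q - 1) / 2) ∧
        (Even q → Nat.card {y : Fin s → Kˣ //
            (y ∈ Set.range fun (x : Fin n → Kˣ) (i : Fin s) => edgeProd x (e i)) ∧
            y ∈ diagSubgroup K s} = q - 1)) ∧
    ((SimpleGraph.fromEdgeSet (Set.range e)).Colorable 2 →
        Nat.card {y : Fin s → Kˣ //
            (y ∈ Set.range fun (x : Fin n → Kˣ) (i : Fin s) => edgeProd x (e i)) ∧
            y ∈ diagSubgroup K s} = q - 1) := by
  classical
  set G := SimpleGraph.fromEdgeSet (Set.range e) with hG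
  set P : Kˣ → Prop := fun l => ∃ x : Fin n → Kˣ, ∀ i, edgeProd x (e i) = l with hP
  have i0 : Fin s := ⟨0, by omega⟩
  -- the equivalence with the set of attainable constants
  have hcards : Nat.card {y : Fin s → Kˣ //
      (y ∈ Set.range fun (x : Fin n → Kˣ) (i : Fin s) => edgeProd x (e i)) ∧
      y ∈ diagSubgroup K s} = Nat.card {l : Kˣ // P l} := by
    refine Nat.card_congr ⟨fun yh => ⟨yh.1 i0, ?_⟩, fun lh => ⟨fun _ => lh.1, ?_, ⟨lh.1, rfl⟩⟩,
      ?_, ?_⟩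
    · obtain ⟨y, ⟨x, hx⟩, ⟨l, rfl⟩⟩ := yh
      exact ⟨x, fun i => congrFun hx i⟩
    · obtain ⟨l, x, hx⟩ := lh
      exact ⟨x, funext fun i => hx i⟩
    · rintro ⟨y, hy1, l, rfl⟩; rfl
    · rintro ⟨l, hl⟩; rfl
  -- squares are always attainable
  have hsq : ∀ l : Kˣ, IsSquare l → P l := by
    rintro l ⟨t, rfl⟩
    refine ⟨fun _ => t, fun i => ?_⟩
    induction (e i) using Sym2.ind with
    | _ a b => rfl
  -- edge adjacency
  have hadj : ∀ i, ∀ a b : Fin n, e i = s(a, b) → G.Adj a b := by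
    intro i a b hab
    rw [hG, SimpleGraph.fromEdgeSet_adj]
    refine ⟨by rw [← hab]; exact ⟨i, rfl⟩, ?_⟩
    intro h; subst h
    exact hnd i (by rw [hab]; exact Sym2.mk_isDiag_iff.2 rfl)
  constructor
  · -- non-bipartite case
    intro hnb
    have hall : ∀ l : Kˣ, P l ↔ IsSquare l := by
      intro l
      refine ⟨fun ⟨x, hx⟩ => ?_, hsq l⟩
      by_contra hns
      apply hnb
      refine SimpleGraph.Coloring.colorable (SimpleGraph.Coloring.mk
        (fun v => if IsSquare (x v) then (0 : Fin 2) else 1) ?_)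
      intro a b hab hc
      obtain ⟨i, hi⟩ : ∃ i, e i = s(a, b) := by
        rw [hG, SimpleGraph.fromEdgeSet_adj] at hab
        obtain ⟨⟨i, hi⟩, _⟩ := hab
        exact ⟨i, hi⟩
      have hxab : x a * x b = l := by rw [← edgeProd_mk x a b, ← hi, hx i]
      by_cases ha : IsSquare (x a) <;> by_cases hb : IsSquare (x b) <;>
        simp [ha, hb] at hc
      · exact hns (hxab ▸ ha.mul hb)
      · exact hns (hxab ▸ nonsq_mul ha hb)
    have hcong : Nat.card {l : Kˣ // P l} = Nat.card {l : Kˣ // IsSquare l} :=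
      Nat.card_congr (Equiv.subtypeEquivRight hall)
    constructor
    · intro hodd
      have hodd' : Odd (Fintype.card K) := by rw [hcard]; exact hodd
      rw [hcards, hcong, card_sq_units hodd', hcard]
    · intro heven
      have hchar : ringChar K = 2 :=
        FiniteField.even_card_iff_char_two.2 (by rw [hcard]; obtain ⟨k, hk⟩ := heven; omega)
      have hallsq : ∀ l : Kˣ, IsSquare l := fun l =>
        (units_isSquare_iff l).2 (FiniteField.isSquare_of_char_two hchar _)
      have : ∀ l : Kˣ, P l := fun l => hsq l (hallsq l)
      rw [hcards, Nat.card_congr (Equiv.subtypeUnivEquiv this),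
        Nat.card_eq_fintype_card, Fintype.card_units, hcard]
  · -- bipartite case
    intro hb
    obtain ⟨C⟩ := hb
    have hall : ∀ l : Kˣ, P l := by
      intro l
      refine ⟨fun v => if C v = 0 then l else 1, fun i => ?_⟩
      have hrep : ∃ a b, e i = s(a, b) :=
        Sym2.ind (f := fun E => ∃ a b, E = s(a, b)) (fun a b => ⟨a, b, rfl⟩) (e i)
      obtain ⟨a, b, h⟩ := hrep
      rw [h]
      · have hadj' : G.Adj a b := hadj i a b h
        have hCne : C a ≠ C b := C.valid hadj'
        rw [edgeProd_mk]
        by_cases hCa : C a = 0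
        · have hCb : ¬ C b = 0 := fun h => hCne (by rw [hCa, h])
          simp [hCa, hCb]
        · have hCb : C b = 0 := by
            have h1 := (C a).isLt; have h2 := (C b).isLt
            have h3 : (C a).val ≠ (C b).val := fun hh => hCne (Fin.ext hh)
            rw [Fin.ext_iff] at hCa ⊢
            omega
          simp [hCa, hCb]
    rw [hcards, Nat.card_congr (Equiv.subtypeUnivEquiv hall),
      Nat.card_eq_fintype_card, Fintype.card_units, hcard]
end
end

section
/- Let G be a simple graph with n vertices, s ≥ 2 edges and no isolated vertices, having exactly m connected components, of which exactly γ are non-bipartite. Then: if γ ≥ 1 and q is odd, 2^{γ−1}·|X| = (q−1)^{n−m+γ−1}; if γ ≥ 1 and q is even, |X| = (q−1)^{n−m+γ−1}; and if γ = 0, |X| = (q−1)^{n−m−1}. -/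
open MvPolynomial

noncomputable section

/-- The cardinality of the image `X` of a subset `Y ⊆ (Kˣ)ˢ` under the quotient
homomorphism `(Kˣ)ˢ → (Kˣ)ˢ/Λ`. -/
def XCard (K : Type) [Field K] {s : ℕ} (Y : Set (Fin s → Kˣ)) : ℕ :=
  Nat.card ((fun y : Fin s → Kˣ =>
    (QuotientGroup.mk y : (Fin s → Kˣ) ⧸ diagSubgroup K s)) '' Y)


open SimpleGraph

section AuxWalk

variable {V : Type} {G : SimpleGraph V}

private lemma walk_val {U : Type} [CommGroup U] {x : V → U} {l : U}
    (hx : ∀ a b, G.Adj a b → x a * x b = l) {u v : V} (p : G.Walk u v) :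
    x v = if Even p.length then x u else l * (x u)⁻¹ := by
  induction p with
  | nil => simp
  | @cons u w v h p ih =>
    have h1 : x w = l * (x u)⁻¹ := by
      refine eq_mul_inv_iff_mul_eq.mpr ?_
      rw [mul_comm]; exact hx u w h
    rw [SimpleGraph.Walk.length_cons]
    rcases Nat.even_or_odd p.length with he | ho
    · rw [if_pos he] at ih
      rw [if_neg (by simp [Nat.even_add_one, he]), ih, h1]
    · rw [if_neg (Nat.not_even_iff_odd.mpr ho)] at ih
      rw [if_pos (by simp [Nat.even_add_one, Nat.not_even_iff_odd.mpr ho]), ih, h1, mul_inv, inv_inv, mul_inv_cancel_left]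

private lemma color_alt {S : Set V} (C : (G.induce S).Coloring (Fin 2))
    {u v : V} (p : G.Walk u v) (hp : ∀ w, w ∈ p.support → w ∈ S) :
    ∀ (hu : u ∈ S) (hv : v ∈ S), (C ⟨u, hu⟩ = C ⟨v, hv⟩ ↔ Even p.length) := by
  induction p with
  | nil => intro hu hv; simp
  | @cons u w v h p ih =>
    intro hu hv
    have hw : w ∈ S := hp w (by simp [SimpleGraph.Walk.support_cons])
    have hadj : (G.induce S).Adj ⟨u, hu⟩ ⟨w, hw⟩ := by
      simp only [SimpleGraph.comap_adj]; exact h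
    have hne := C.valid hadj
    have ihh := ih (fun z hz => hp z (by simp [SimpleGraph.Walk.support_cons, hz])) hw hv
    rw [SimpleGraph.Walk.length_cons, Nat.even_add_one, ← ihh]
    have h2 : (C ⟨u, hu⟩).val < 2 := (C ⟨u, hu⟩).isLt
    have h3 : (C ⟨w, hw⟩).val < 2 := (C ⟨w, hw⟩).isLt
    have h4 : (C ⟨v, hv⟩).val < 2 := (C ⟨v, hv⟩).isLt
    simp only [Fin.ext_iff, ne_eq] at hne ⊢
    constructor <;> intro h5 <;> omega

end AuxWalk

section AuxBip

variable {V : Type} {G : SimpleGraph V}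

private lemma supp_of_walk {c : G.ConnectedComponent} {u v : V} (hu : u ∈ c.supp)
    (p : G.Walk u v) : ∀ w ∈ p.support, w ∈ c.supp := by
  classical
  intro w hw
  have : G.Reachable u w := ⟨p.takeUntil w hw⟩
  rw [SimpleGraph.ConnectedComponent.mem_supp_iff] at hu ⊢
  rw [← hu]
  exact (SimpleGraph.ConnectedComponent.eq).mpr this.symm

private lemma even_closed_of_colorable {c : G.ConnectedComponent}
    (hc : (G.induce c.supp).Colorable 2) {v : V} (hv : v ∈ c.supp) (p : G.Walk v v) :
    Even p.length := by
  obtain ⟨C⟩ := hc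
  exact (color_alt C p (supp_of_walk hv p) hv hv).mp rfl

private lemma not_colorable_of_odd_closed {c : G.ConnectedComponent}
    {v : V} (hv : v ∈ c.supp) (p : G.Walk v v) (ho : Odd p.length) :
    ¬ (G.induce c.supp).Colorable 2 := fun hc =>
  (Nat.not_even_iff_odd.mpr ho) (even_closed_of_colorable hc hv p)

private lemma odd_closed_of_not_colorable {c : G.ConnectedComponent}
    (hnc : ¬ (G.induce c.supp).Colorable 2) {r : V} (hr : r ∈ c.supp) :
    ∃ p : G.Walk r r, Odd p.length := by
  classical
  by_contra hodd
  push_neg at hodd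
  have heven : ∀ p : G.Walk r r, Even p.length := fun p =>
    Nat.not_odd_iff_even.mp (hodd p)
  have key : ∀ (u : V) (p q : G.Walk r u), Even (p.length + q.length) := by
    intro u p q
    have := heven (p.append q.reverse)
    rwa [SimpleGraph.Walk.length_append, SimpleGraph.Walk.length_reverse] at this
  refine hnc ⟨SimpleGraph.Coloring.mk
    (fun v => if ∃ p : G.Walk r v.1, Even p.length then 0 else 1) ?_⟩
  intro a b hadj hcol
  simp only [SimpleGraph.comap_adj, Function.Embedding.coe_subtype] at hadj
  have hcol' : (if ∃ p : G.Walk r a.1, Even p.length then (0:Fin 2) else 1)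
      = (if ∃ p : G.Walk r b.1, Even p.length then (0:Fin 2) else 1) := hcol
  have hreach : G.Reachable r a.1 := by
    refine (SimpleGraph.ConnectedComponent.eq).mp ?_
    rw [SimpleGraph.ConnectedComponent.mem_supp_iff] at hr
    rw [hr, a.2]
  obtain ⟨p⟩ := hreach
  by_cases hea : ∃ p : G.Walk r a.1, Even p.length
  · have heb : ∃ p : G.Walk r b.1, Even p.length := by
      by_contra heb
      rw [if_pos hea, if_neg heb] at hcol'
      exact absurd hcol' (by decide)
    obtain ⟨pa, hpa⟩ := hea
    obtain ⟨pb, hpb⟩ := heb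
    have := key b.1 (pa.append (SimpleGraph.Walk.cons hadj SimpleGraph.Walk.nil)) pb
    rw [SimpleGraph.Walk.length_append, SimpleGraph.Walk.length_cons,
      SimpleGraph.Walk.length_nil] at this
    rcases hpa with ⟨ka, hka⟩
    rcases hpb with ⟨kb, hkb⟩
    rcases this with ⟨kc, hkc⟩
    omega
  · have hpodd : ¬ Even p.length := fun hcon => hea ⟨p, hcon⟩
    have : ∃ q : G.Walk r b.1, Even q.length := by
      refine ⟨p.append (SimpleGraph.Walk.cons hadj SimpleGraph.Walk.nil), ?_⟩
      rw [SimpleGraph.Walk.length_append, SimpleGraph.Walk.length_cons,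
        SimpleGraph.Walk.length_nil]
      rcases Nat.even_or_odd p.length with hc' | hc'
      · exact absurd hc' hpodd
      · rcases hc' with ⟨k, hk⟩; exact ⟨k + 1, by omega⟩
    rw [if_neg hea, if_pos this] at hcol'
    exact absurd hcol' (by decide)

end AuxBip

section Count

variable {V : Type} [Fintype V] {U : Type} [CommGroup U]

private lemma mk_out {G : SimpleGraph V} (c : G.ConnectedComponent) :
    G.connectedComponentMk (Quot.out c) = c := Quot.out_eq c

private lemma out_mem_supp {G : SimpleGraph V} (c : G.ConnectedComponent) :
    Quot.out c ∈ c.supp := (SimpleGraph.ConnectedComponent.mem_supp_iff c _).mpr (mk_out c)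

private lemma card_A (G : SimpleGraph V) (l : U) :
    Nat.card {x : V → U // ∀ a b, G.Adj a b → x a * x b = l}
      = Nat.card {f : G.ConnectedComponent → U //
          ∀ c, ¬ (G.induce c.supp).Colorable 2 → f c * f c = l} := by
  classical
  refine Nat.card_eq_of_bijective (fun x => ⟨fun c => x.1 (Quot.out c), ?_⟩) ⟨?_, ?_⟩
  · -- well-defined
    intro c hnc
    obtain ⟨p, hp⟩ := odd_closed_of_not_colorable hnc (out_mem_supp c)
    have := walk_val x.2 p
    rw [if_neg (Nat.not_even_iff_odd.mpr hp)] at this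
    exact eq_mul_inv_iff_mul_eq.mp this
  · -- injective
    rintro ⟨x, hx⟩ ⟨y, hy⟩ hxy
    simp only [Subtype.mk.injEq] at hxy ⊢
    funext v
    obtain ⟨p⟩ : G.Reachable (Quot.out (G.connectedComponentMk v)) v :=
      SimpleGraph.ConnectedComponent.exact (mk_out _)
    have h1 := walk_val hx p
    have h2 := walk_val hy p
    have h3 : x (Quot.out (G.connectedComponentMk v))
        = y (Quot.out (G.connectedComponentMk v)) := congrFun hxy _
    rw [h1, h2, h3]
  · -- surjective
    rintro ⟨f, hf⟩
    refine ⟨⟨fun v => if h : ∃ p : G.Walk (Quot.out (G.connectedComponentMk v)) v,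
        Even p.length then f (G.connectedComponentMk v)
        else l * (f (G.connectedComponentMk v))⁻¹, ?_⟩, ?_⟩
    · intro a b hadj
      beta_reduce
      have hcb : G.connectedComponentMk b = G.connectedComponentMk a :=
        (SimpleGraph.ConnectedComponent.connectedComponentMk_eq_of_adj hadj).symm
      have hPb : (∃ p : G.Walk (Quot.out (G.connectedComponentMk b)) b, Even p.length)
          ↔ (∃ p : G.Walk (Quot.out (G.connectedComponentMk a)) b, Even p.length) := by
        rw [hcb]
      have hfb : f (G.connectedComponentMk b) = f (G.connectedComponentMk a) := by rw [hcb]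
      obtain ⟨pa⟩ : G.Reachable (Quot.out (G.connectedComponentMk a)) a :=
        SimpleGraph.ConnectedComponent.exact (mk_out _)
      by_cases hpa : ∃ p : G.Walk (Quot.out (G.connectedComponentMk a)) a, Even p.length
      · by_cases hqb : ∃ p : G.Walk (Quot.out (G.connectedComponentMk a)) b, Even p.length
        · -- both even: component is non-bipartite
          obtain ⟨p1, hp1⟩ := id hpa
          obtain ⟨p2, hp2⟩ := id hqb
          have hodd : Odd ((p1.append (SimpleGraph.Walk.cons hadj
              SimpleGraph.Walk.nil)).append p2.reverse).length := by
            rw [SimpleGraph.Walk.length_append, SimpleGraph.Walk.length_append,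
              SimpleGraph.Walk.length_cons, SimpleGraph.Walk.length_nil,
              SimpleGraph.Walk.length_reverse]
            rcases hp1 with ⟨k1, hk1⟩; rcases hp2 with ⟨k2, hk2⟩
            exact ⟨k1 + k2, by omega⟩
          have hnc := not_colorable_of_odd_closed (out_mem_supp
            (G.connectedComponentMk a)) _ hodd
          have hsq := hf _ hnc
          rw [dif_pos hpa, dif_pos (hPb.mpr hqb), hfb]
          exact hsq
        · rw [dif_pos hpa, dif_neg (fun hc => hqb (hPb.mp hc)), hfb]
          rw [mul_comm, mul_assoc, inv_mul_cancel, mul_one]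
      · by_cases hqb : ∃ p : G.Walk (Quot.out (G.connectedComponentMk a)) b, Even p.length
        · rw [dif_neg hpa, dif_pos (hPb.mpr hqb), hfb]
          rw [mul_assoc, inv_mul_cancel, mul_one]
        · exfalso
          have hpodd : ¬ Even pa.length := fun hc => hpa ⟨pa, hc⟩
          refine hqb ⟨pa.append (SimpleGraph.Walk.cons hadj SimpleGraph.Walk.nil), ?_⟩
          rw [SimpleGraph.Walk.length_append, SimpleGraph.Walk.length_cons,
            SimpleGraph.Walk.length_nil]
          rcases Nat.not_even_iff_odd.mp hpodd with ⟨k, hk⟩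
          exact ⟨k + 1, by omega⟩
    · -- maps to f
      refine Subtype.ext (funext fun c => ?_)
      have h1 : G.connectedComponentMk (Quot.out c) = c := mk_out c
      have h2 : ∃ p : G.Walk (Quot.out (G.connectedComponentMk (Quot.out c)))
          (Quot.out c), Even p.length := by
        rw [h1]
        exact ⟨SimpleGraph.Walk.nil, by simp⟩
      simp only
      rw [dif_pos h2, h1]

end Count

section CountF

variable {V : Type} [Fintype V] {U : Type} [CommGroup U] [Finite U]

private lemma card_F (G : SimpleGraph V) (l : U) :
    Nat.card {f : G.ConnectedComponent → U //
        ∀ c, ¬ (G.induce c.supp).Colorable 2 → f c * f c = l}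
      = (Nat.card {t : U // t * t = l}) ^
          (Nat.card {c : G.ConnectedComponent // ¬ (G.induce c.supp).Colorable 2})
        * (Nat.card U) ^
          (Nat.card {c : G.ConnectedComponent // ¬ ¬ (G.induce c.supp).Colorable 2}) := by
  classical
  haveI : Fintype G.ConnectedComponent := Fintype.ofFinite _
  rw [Nat.card_congr (Equiv.subtypePiEquivPi
    (p := fun (c : G.ConnectedComponent) (t : U) =>
      ¬ (G.induce c.supp).Colorable 2 → t * t = l)), Nat.card_pi]
  have hfac : ∀ c : G.ConnectedComponent,
      Nat.card {t : U // ¬ (G.induce c.supp).Colorable 2 → t * t = l}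
        = if ¬ (G.induce c.supp).Colorable 2 then Nat.card {t : U // t * t = l}
          else Nat.card U := by
    intro c
    by_cases h : ¬ (G.induce c.supp).Colorable 2
    · rw [if_pos h]
      exact Nat.card_congr (Equiv.subtypeEquivRight (fun t => by simp [h]))
    · rw [if_neg h]
      exact Nat.card_congr (Equiv.subtypeUnivEquiv (fun t hc => absurd hc h))
  rw [Finset.prod_congr rfl (fun c _ => hfac c), Finset.prod_ite, Finset.prod_const,
    Finset.prod_const]
  congr 1
  · congr 1
    rw [Nat.card_eq_fintype_card, Fintype.card_subtype]
  · congr 1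
    rw [Nat.card_eq_fintype_card, Fintype.card_subtype]

end CountF

section SqCount

variable {U : Type} [CommGroup U] [Finite U]

private def sqHom (U : Type) [CommGroup U] : U →* U :=
  MonoidHom.mk' (fun t => t * t) (fun a b => mul_mul_mul_comm a b a b)

private lemma card_sq_fiber (l : U) (h : ∃ t0 : U, t0 * t0 = l) :
    Nat.card {t : U // t * t = l} = Nat.card {t : U // t * t = 1} := by
  obtain ⟨t0, ht0⟩ := h
  refine Nat.card_eq_of_bijective (fun t => ⟨t.1 * t0⁻¹, ?_⟩) ⟨?_, ?_⟩
  · have := t.2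
    calc t.1 * t0⁻¹ * (t.1 * t0⁻¹) = (t.1 * t.1) * (t0⁻¹ * t0⁻¹) :=
          mul_mul_mul_comm _ _ _ _
      _ = (t.1 * t.1) * (t0 * t0)⁻¹ := by rw [mul_inv]
      _ = 1 := by rw [t.2, ht0, mul_inv_cancel]
  · rintro ⟨a, ha⟩ ⟨b, hb⟩ hab
    simp only [Subtype.mk.injEq] at hab ⊢
    exact mul_right_cancel hab
  · rintro ⟨u, hu⟩
    refine ⟨⟨u * t0, ?_⟩, ?_⟩
    · calc u * t0 * (u * t0) = (u * u) * (t0 * t0) := mul_mul_mul_comm u t0 u t0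
        _ = l := by rw [hu, ht0, one_mul]
    · simp only [Subtype.mk.injEq]
      rw [mul_assoc, mul_inv_cancel, mul_one]

private lemma card_sq_fiber_zero (l : U) (h : ¬ ∃ t0 : U, t0 * t0 = l) :
    Nat.card {t : U // t * t = l} = 0 := by
  haveI : IsEmpty {t : U // t * t = l} := ⟨fun t => h ⟨t.1, t.2⟩⟩
  exact Nat.card_of_isEmpty

private lemma sum_sq_fibers [Fintype U] (γ : ℕ) :
    ∑ l : U, (Nat.card {t : U // t * t = l}) ^ γ
      = (Nat.card U) * (Nat.card {t : U // t * t = 1}) ^ (γ - 1) := by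
  classical
  rcases Nat.eq_zero_or_pos γ with rfl | hγ
  · simp [Nat.card_eq_fintype_card, Finset.card_univ]
  have hd : Nat.card ↥(MonoidHom.ker (sqHom U)) = Nat.card {t : U // t * t = 1} :=
    Nat.card_congr (Equiv.subtypeEquivRight (fun t => Iff.rfl))
  have hlag : Nat.card U = Nat.card ↥(MonoidHom.range (sqHom U))
      * Nat.card ↥(MonoidHom.ker (sqHom U)) := by
    rw [Subgroup.card_eq_card_quotient_mul_card_subgroup (MonoidHom.ker (sqHom U))]
    congr 1
    exact Nat.card_congr (QuotientGroup.quotientKerEquivRange (sqHom U)).toEquiv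
  have hsum : ∑ l : U, (Nat.card {t : U // t * t = l}) ^ γ
      = ∑ l : U, (if ∃ t0 : U, t0 * t0 = l
          then (Nat.card {t : U // t * t = 1}) ^ γ else 0) := by
    refine Finset.sum_congr rfl (fun l _ => ?_)
    by_cases h : ∃ t0 : U, t0 * t0 = l
    · rw [if_pos h, card_sq_fiber l h]
    · rw [if_neg h, card_sq_fiber_zero l h]
      exact zero_pow hγ.ne'
  rw [hsum, Finset.sum_ite, Finset.sum_const, Finset.sum_const_zero, add_zero,
    smul_eq_mul]
  have hcr : (Finset.filter (fun l : U => ∃ t0 : U, t0 * t0 = l) Finset.univ).card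
      = Nat.card ↥(MonoidHom.range (sqHom U)) := by
    have hmem : ∀ lU : U, (∃ t0 : U, t0 * t0 = lU) ↔ lU ∈ MonoidHom.range (sqHom U) :=
      fun lU => ⟨fun ⟨t0, h⟩ => ⟨t0, h⟩, fun ⟨t0, h⟩ => ⟨t0, h⟩⟩
    calc (Finset.filter (fun l : U => ∃ t0 : U, t0 * t0 = l) Finset.univ).card
        = (Finset.filter (fun l : U => l ∈ MonoidHom.range (sqHom U)) Finset.univ).card := by
          simp only [hmem]
      _ = Nat.card ↥(MonoidHom.range (sqHom U)) :=
          by rw [← Nat.card_eq_finsetCard]; exact Nat.card_congr (Equiv.subtypeEquivRight (fun l => by simp))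
  rw [hcr, hlag]
  have : (Nat.card {t : U // t * t = 1}) ^ γ
      = Nat.card {t : U // t * t = 1} * (Nat.card {t : U // t * t = 1}) ^ (γ - 1) := by
    conv_lhs => rw [show γ = 1 + (γ - 1) by omega]
    rw [pow_add, pow_one]
  rw [hd, this]
  ring

end SqCount

section RootsOne

variable (K : Type) [Field K] [Fintype K]

private lemma sq_one_iff (t : Kˣ) : t * t = 1 ↔ (t : K) = 1 ∨ (t : K) = -1 := by
  rw [Units.ext_iff, Units.val_mul, Units.val_one, mul_self_eq_one_iff]

private lemma card_sqrt_one_odd (h : Odd (Fintype.card K)) :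
    Nat.card {t : Kˣ // t * t = 1} = 2 := by
  have hval : ((-1 : Kˣ) : K) = -1 := by rw [Units.val_neg, Units.val_one]
  have hchar : ringChar K ≠ 2 := by
    intro h2
    have h3 := FiniteField.even_card_iff_char_two.mp h2
    have h4 := Nat.odd_iff.mp h
    omega
  haveI : CharP K (ringChar K) := ringChar.charP K
  have hp : (ringChar K).Prime := CharP.char_is_prime K (ringChar K)
  have h2lt : 2 < ringChar K := lt_of_le_of_ne hp.two_le (Ne.symm hchar)
  haveI : Fact (2 < ringChar K) := ⟨h2lt⟩
  have hne : (-1 : K) ≠ 1 := CharP.neg_one_ne_one K (ringChar K)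
  have hneU : (1 : Kˣ) ≠ -1 := by
    intro hcon
    apply hne
    rw [← hval, ← hcon, Units.val_one]
  have hset : {t : Kˣ | t * t = 1} = {1, -1} := by
    ext t
    simp only [Set.mem_setOf_eq, Set.mem_insert_iff, Set.mem_singleton_iff, sq_one_iff]
    constructor
    · rintro (h1 | h1)
      · left; exact Units.ext h1
      · right; refine Units.ext ?_; rw [h1, hval]
    · rintro (rfl | rfl)
      · left; exact Units.val_one
      · right; exact hval
  calc Nat.card {t : Kˣ // t * t = 1} = ({t : Kˣ | t * t = 1}).ncard :=
        Nat.card_coe_set_eq _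
    _ = 2 := by rw [hset]; exact Set.ncard_pair hneU

private lemma card_sqrt_one_even (h : Even (Fintype.card K)) :
    Nat.card {t : Kˣ // t * t = 1} = 1 := by
  have h2 : ringChar K = 2 := FiniteField.even_card_iff_char_two.mpr
    (Nat.even_iff.mp h)
  haveI : CharP K 2 := h2 ▸ ringChar.charP K
  have hval : ((-1 : Kˣ) : K) = -1 := by rw [Units.val_neg, Units.val_one]
  have hneg : (-1 : K) = 1 := CharTwo.neg_eq 1
  have hset : {t : Kˣ | t * t = 1} = {1} := by
    ext t
    simp only [Set.mem_setOf_eq, Set.mem_singleton_iff, sq_one_iff]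
    constructor
    · rintro (h1 | h1)
      · exact Units.ext (by rw [h1, Units.val_one])
      · exact Units.ext (by rw [h1, hneg, Units.val_one])
    · rintro rfl
      left; exact Units.val_one
  calc Nat.card {t : Kˣ // t * t = 1} = ({t : Kˣ | t * t = 1}).ncard :=
        Nat.card_coe_set_eq _
    _ = 1 := by rw [hset]; exact Set.ncard_singleton _

end RootsOne

private lemma nat_card_sigma {α : Type} [Fintype α] (β : α → Type) [∀ a, Finite (β a)] :
    Nat.card (Σ a, β a) = ∑ a, Nat.card (β a) := by
  classical
  haveI : ∀ a, Fintype (β a) := fun a => Fintype.ofFinite _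
  simp_rw [Nat.card_eq_fintype_card]
  exact Fintype.card_sigma

/-- Let `G` be a simple graph with `n` vertices, `s ≥ 2` edges, no isolated
vertices, exactly `m` connected components of which exactly `γ` are non-bipartite, over a
finite field `K` with `q > 2` elements.  Let `X` be the image in `(Kˣ)ˢ/Λ` of the algebraic
toric set `X*` parameterized by the edges of `G`.  Then: if `γ ≥ 1` and `q` is odd,
`2^(γ−1)·|X| = (q−1)^(n−m+γ−1)`; if `γ ≥ 1` and `q` is even, `|X| = (q−1)^(n−m+γ−1)`;
and if `γ = 0`, `|X| = (q−1)^(n−m−1)`. -/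
theorem length_formula_any_graph
    (q n s m γ : ℕ) (hq : 2 < q) (K : Type) [Field K] [Fintype K]
    (hcard : Fintype.card K = q) (hs : 2 ≤ s)
    (e : Fin s → Sym2 (Fin n)) (he : Function.Injective e)
    (hnd : ∀ i, ¬ (e i).IsDiag)
    (hiso : ∀ v : Fin n, ∃ i, v ∈ e i)
    (G : SimpleGraph (Fin n)) (hG : G = SimpleGraph.fromEdgeSet (Set.range e))
    (hm : Nat.card G.ConnectedComponent = m)
    (hγ : Nat.card {c : G.ConnectedComponent //
        ¬ (G.induce c.supp).Colorable 2} = γ) :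
    (1 ≤ γ → Odd q →
        2 ^ (γ - 1) * XCard K (Set.range fun (x : Fin n → Kˣ) (i : Fin s) => edgeProd x (e i))
          = (q - 1) ^ (n - m + γ - 1)) ∧
    (1 ≤ γ → Even q →
        XCard K (Set.range fun (x : Fin n → Kˣ) (i : Fin s) => edgeProd x (e i))
          = (q - 1) ^ (n - m + γ - 1)) ∧
    (γ = 0 →
        XCard K (Set.range fun (x : Fin n → Kˣ) (i : Fin s) => edgeProd x (e i))
          = (q - 1) ^ (n - m - 1)) := by
  classical
  -- basic setup
  have hq1 : 0 < q - 1 := by omega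
  have hs0 : 0 < s := by omega
  -- every edge gives an adjacency
  have hedge : ∀ i : Fin s, ∃ a b : Fin n, e i = s(a, b) ∧ G.Adj a b := by
    intro i
    obtain ⟨⟨a, b⟩, hab⟩ := Quot.exists_rep (e i)
    refine ⟨a, b, hab.symm, ?_⟩
    rw [hG, SimpleGraph.fromEdgeSet_adj]
    refine ⟨⟨i, hab.symm⟩, ?_⟩
    intro hcon
    apply hnd i
    rw [← hab, hcon]
    exact Sym2.mk_isDiag_iff.mpr rfl
  -- adjacency gives an edge
  have hadj_edge : ∀ a b : Fin n, G.Adj a b → ∃ i, e i = s(a, b) := by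
    intro a b hab
    rw [hG, SimpleGraph.fromEdgeSet_adj] at hab
    exact hab.1
  -- inequalities
  obtain ⟨a0, b0, hab0, hadj0⟩ := hedge ⟨0, hs0⟩
  have hm1 : 1 ≤ m := by
    rw [← hm]
    haveI : Nonempty G.ConnectedComponent := ⟨G.connectedComponentMk a0⟩
    exact Nat.card_pos
  have hγm : γ ≤ m := by
    rw [← hm, ← hγ]
    exact Nat.card_le_card_of_injective Subtype.val Subtype.val_injective
  have hmn : m < n := by
    haveI : Fintype G.ConnectedComponent := Fintype.ofFinite _
    rw [← hm, Nat.card_eq_fintype_card]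
    have := Fintype.card_lt_of_surjective_not_injective G.connectedComponentMk
      (fun c => Quot.exists_rep c)
      (fun hinj => by
        have hne : a0 ≠ b0 := G.ne_of_adj hadj0
        exact hne (hinj (SimpleGraph.ConnectedComponent.connectedComponentMk_eq_of_adj hadj0)))
    simpa using this
  have harith1 : n - m + γ - 1 + (m - γ + 1) = n := by omega
  have harith3 : n - m - 1 + (m + 1) = n := by omega
  -- the parameterizing monoid hom
  have edgeProd_mul : ∀ (x y : Fin n → Kˣ) (E : Sym2 (Fin n)),
      edgeProd (x * y) E = edgeProd x E * edgeProd y E := by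
    intro x y E
    refine Sym2.ind (fun a b => ?_) E
    exact mul_mul_mul_comm (x a) (y a) (x b) (y b)
  set θ : (Fin n → Kˣ) →* (Fin s → Kˣ) :=
    MonoidHom.mk' (fun x i => edgeProd x (e i))
      (fun x y => funext fun i => edgeProd_mul x y (e i)) with hθ
  set φ : (Fin n → Kˣ) →* (Fin s → Kˣ) ⧸ diagSubgroup K s :=
    (QuotientGroup.mk' (diagSubgroup K s)).comp θ with hφ
  -- XCard is the cardinality of range φ
  have hX : XCard K (Set.range fun (x : Fin n → Kˣ) (i : Fin s) => edgeProd x (e i))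
      = Nat.card (Set.range ⇑φ) := by
    unfold XCard
    congr 1
    rw [show (Set.range fun (x : Fin n → Kˣ) (i : Fin s) => edgeProd x (e i))
      = Set.range ⇑θ from rfl, ← Set.range_comp]
    rfl
  -- Lagrange
  have hcardU : Nat.card Kˣ = q - 1 := by
    rw [Nat.card_eq_fintype_card, Fintype.card_units, hcard]
  have hlag : Nat.card (Set.range ⇑φ) * Nat.card ↥(MonoidHom.ker φ) = (q - 1) ^ n := by
    have h1 : Nat.card (Fin n → Kˣ) = (q - 1) ^ n := by
      rw [Nat.card_fun, hcardU, Nat.card_eq_fintype_card, Fintype.card_fin]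
    rw [← h1, Subgroup.card_eq_card_quotient_mul_card_subgroup (MonoidHom.ker φ)]
    congr 1
    rw [Nat.card_congr (QuotientGroup.quotientKerEquivRange φ).toEquiv]
    exact Nat.card_congr (Equiv.setCongr (MonoidHom.coe_range φ))
  -- kernel of φ as a sigma type
  have hker_sigma : Nat.card ↥(MonoidHom.ker φ)
      = ∑ l : Kˣ, Nat.card {x : Fin n → Kˣ // ∀ a b, G.Adj a b → x a * x b = l} := by
    rw [← nat_card_sigma]
    refine Nat.card_eq_of_bijective (fun x => ⟨θ x.1 ⟨0, hs0⟩, x.1, ?_⟩) ⟨?_, ?_⟩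
    · intro a b hab
      obtain ⟨i, hi⟩ := hadj_edge a b hab
      have hmem : θ x.1 ∈ diagSubgroup K s := (QuotientGroup.eq_one_iff (θ x.1)).mp x.2
      obtain ⟨l, hl⟩ := hmem
      have h1 : x.1 a * x.1 b = θ x.1 i := by
        show x.1 a * x.1 b = edgeProd x.1 (e i)
        rw [hi]
        rfl
      rw [h1, hl]
    · intro x y hxy
      have h1 : x.1 = y.1 := congrArg (fun p : (Σ l : Kˣ,
        {z : Fin n → Kˣ // ∀ a b, G.Adj a b → z a * z b = l}) => p.2.1) hxy
      exact Subtype.ext h1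
    · rintro ⟨l, x, hx⟩
      have hθx : θ x = fun _ => l := by
        funext i
        obtain ⟨a, b, hab, hadj⟩ := hedge i
        have h1 : θ x i = x a * x b := by
          show edgeProd x (e i) = x a * x b
          rw [hab]
          rfl
        rw [h1, hx a b hadj]
      have hker : x ∈ MonoidHom.ker φ := by
        refine (QuotientGroup.eq_one_iff (θ x)).mpr ?_
        exact ⟨l, hθx⟩
      refine ⟨⟨x, hker⟩, ?_⟩
      have h2 : θ x ⟨0, hs0⟩ = l := by rw [hθx]
      exact Sigma.ext h2 (by subst h2; rfl)
  -- count each fiber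
  have hmγ : Nat.card {c : G.ConnectedComponent // ¬ ¬ (G.induce c.supp).Colorable 2}
      = m - γ := by
    haveI : Fintype G.ConnectedComponent := Fintype.ofFinite _
    rw [Nat.card_eq_fintype_card] at hm ⊢
    rw [Nat.card_eq_fintype_card] at hγ
    rw [← hm, ← hγ, Fintype.card_subtype_compl]
  have hfiber : ∀ l : Kˣ,
      Nat.card {x : Fin n → Kˣ // ∀ a b, G.Adj a b → x a * x b = l}
        = (Nat.card {t : Kˣ // t * t = l}) ^ γ * (q - 1) ^ (m - γ) := by
    intro l
    rw [card_A G l, card_F G l, hγ, hmγ, hcardU]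
  -- total kernel cardinality
  have hker_card : Nat.card ↥(MonoidHom.ker φ)
      = (q - 1) * (Nat.card {t : Kˣ // t * t = 1}) ^ (γ - 1) * (q - 1) ^ (m - γ) := by
    rw [hker_sigma]
    calc ∑ l : Kˣ, Nat.card {x : Fin n → Kˣ // ∀ a b, G.Adj a b → x a * x b = l}
        = ∑ l : Kˣ, (Nat.card {t : Kˣ // t * t = l}) ^ γ * (q - 1) ^ (m - γ) :=
          Finset.sum_congr rfl (fun l _ => hfiber l)
      _ = (∑ l : Kˣ, (Nat.card {t : Kˣ // t * t = l}) ^ γ) * (q - 1) ^ (m - γ) := by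
          rw [← Finset.sum_mul]
      _ = ((Nat.card Kˣ) * (Nat.card {t : Kˣ // t * t = 1}) ^ (γ - 1)) * (q - 1) ^ (m - γ) := by
          rw [sum_sq_fibers]
      _ = (q - 1) * (Nat.card {t : Kˣ // t * t = 1}) ^ (γ - 1) * (q - 1) ^ (m - γ) := by
          rw [hcardU]
  -- final assembly
  refine ⟨?_, ?_, ?_⟩
  · intro hγ1 hodd
    have hd : Nat.card {t : Kˣ // t * t = 1} = 2 :=
      card_sqrt_one_odd K (by rw [hcard]; exact hodd)
    have hmain : Nat.card (Set.range ⇑φ) * ((q - 1) * 2 ^ (γ - 1) * (q - 1) ^ (m - γ))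
        = (q - 1) ^ n := by rw [← hd, ← hker_card]; exact hlag
    have hpow : (q - 1) ^ n = (q - 1) ^ (n - m + γ - 1) * (q - 1) ^ (m - γ + 1) :=
      (by rw [← pow_add, harith1] : (q-1)^(n-m+γ-1) * (q-1)^(m-γ+1) = (q-1)^n).symm
    rw [hX]
    refine Nat.eq_of_mul_eq_mul_right (pow_pos hq1 (m - γ + 1)) ?_
    calc 2 ^ (γ - 1) * Nat.card (Set.range ⇑φ) * (q - 1) ^ (m - γ + 1)
        = Nat.card (Set.range ⇑φ) * ((q - 1) * 2 ^ (γ - 1) * (q - 1) ^ (m - γ)) := by ring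
      _ = (q - 1) ^ (n - m + γ - 1) * (q - 1) ^ (m - γ + 1) := by rw [hmain, hpow]
  · intro hγ1 heven
    have hd : Nat.card {t : Kˣ // t * t = 1} = 1 :=
      card_sqrt_one_even K (by rw [hcard]; exact heven)
    have hmain : Nat.card (Set.range ⇑φ) * ((q - 1) * (q - 1) ^ (m - γ))
        = (q - 1) ^ n := by
      rw [← hlag, hker_card, hd]
      ring
    have hpow : (q - 1) ^ n = (q - 1) ^ (n - m + γ - 1) * (q - 1) ^ (m - γ + 1) :=
      (by rw [← pow_add, harith1] : (q-1)^(n-m+γ-1) * (q-1)^(m-γ+1) = (q-1)^n).symm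
    rw [hX]
    refine Nat.eq_of_mul_eq_mul_right (pow_pos hq1 (m - γ + 1)) ?_
    calc Nat.card (Set.range ⇑φ) * (q - 1) ^ (m - γ + 1)
        = Nat.card (Set.range ⇑φ) * ((q - 1) * (q - 1) ^ (m - γ)) := by ring
      _ = (q - 1) ^ (n - m + γ - 1) * (q - 1) ^ (m - γ + 1) := by rw [hmain, hpow]
  · intro hγ0
    subst hγ0
    have hmain : Nat.card (Set.range ⇑φ) * ((q - 1) * (q - 1) ^ m)
        = (q - 1) ^ n := by
      rw [← hlag, hker_card]
      simp
    have hpow : (q - 1) ^ n = (q - 1) ^ (n - m - 1) * (q - 1) ^ (m + 1) :=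
      (by rw [← pow_add, harith3] : (q-1)^(n-m-1) * (q-1)^(m+1) = (q-1)^n).symm
    rw [hX]
    refine Nat.eq_of_mul_eq_mul_right (pow_pos hq1 (m + 1)) ?_
    calc Nat.card (Set.range ⇑φ) * (q - 1) ^ (m + 1)
        = Nat.card (Set.range ⇑φ) * ((q - 1) * (q - 1) ^ m) := by ring
      _ = (q - 1) ^ (n - m - 1) * (q - 1) ^ (m + 1) := by rw [hmain, hpow]
end
end

section
/- Let X^* ⊆ (K^*)^s be the algebraic toric set parameterized by ν_1,…,ν_s ∈ ℕ^n and I(X) ⊆ S its vanishing ideal. Let f = t^a − t^b ∈ I(X) with a, b ∈ ℕ^s and supp(a) ∩ supp(b) = ∅, and suppose there is an index i with a_i ≥ q−1 and that supp(b) ≠ ∅. Then there exist c, d ∈ ℕ^s and an index j ∈ {1,…,s} such that g = t^c − t^d ∈ I(X), either g = 0 or the total degree of g is strictly less than the total degree of f, and f − t_j·g lies in the ideal of S generated by {t_i^{q−1} − t_l^{q−1} : 1 ≤ i, l ≤ s}. -/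
open MvPolynomial

noncomputable section

/-- The vanishing ideal `I(X) ⊆ K[t_1,…,t_s]` of the algebraic toric set parameterized by
`ν_1,…,ν_s ∈ ℕ^n`. -/
def toricVanishingIdeal (K : Type) [Field K] {n s : ℕ} (ν : Fin s → Fin n → ℕ) :
    Ideal (MvPolynomial (Fin s) K) :=
  Ideal.span {f | (∃ d, f.IsHomogeneous d) ∧
    ∀ x : Fin n → Kˣ, eval (fun i => ((∏ j, x j ^ ν i j : Kˣ) : K)) f = 0}

/-- With `f = t^a − t^b ∈ I(X)`, `supp(a) ∩ supp(b) = ∅`, `a i ≥ q−1` for some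
index `i`, and `supp(b) ≠ ∅`, there exist `c, d ∈ ℕ^s` and an index `j` with
`g = t^c − t^d ∈ I(X)`, `g = 0` or `deg g < deg f`, and `f − t_j·g` in the ideal generated
by the toric relations `t_i^{q−1} − t_l^{q−1}`. -/
theorem degree_reduction
    (q n s : ℕ) (hq : 2 < q) (hs : 2 ≤ s) (K : Type) [Field K] [Fintype K]
    (hcard : Fintype.card K = q)
    (ν : Fin s → Fin n → ℕ)
    (a b : Fin s →₀ ℕ)
    (hf : (monomial a 1 - monomial b 1 : MvPolynomial (Fin s) K) ∈
      toricVanishingIdeal K ν)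
    (hdisj : Disjoint a.support b.support)
    (i : Fin s) (hi : q - 1 ≤ a i)
    (hbne : b.support.Nonempty) :
    ∃ (c d : Fin s →₀ ℕ) (j : Fin s),
      (monomial c 1 - monomial d 1 : MvPolynomial (Fin s) K) ∈ toricVanishingIdeal K ν ∧
      ((monomial c 1 - monomial d 1 : MvPolynomial (Fin s) K) = 0 ∨
        (monomial c 1 - monomial d 1 : MvPolynomial (Fin s) K).totalDegree <
          (monomial a 1 - monomial b 1 : MvPolynomial (Fin s) K).totalDegree) ∧
      (monomial a 1 - monomial b 1 : MvPolynomial (Fin s) K) -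
          X j * (monomial c 1 - monomial d 1) ∈
        Ideal.span {p : MvPolynomial (Fin s) K |
          ∃ i' l : Fin s, p = X i' ^ (q - 1) - X l ^ (q - 1)} := by
  classical
  obtain ⟨j, hj⟩ := hbne
  have hbj : 1 ≤ b j := Nat.one_le_iff_ne_zero.mpr (Finsupp.mem_support_iff.mp hj)
  obtain ⟨a', ha⟩ : ∃ a', a' + Finsupp.single i (q - 1) = a :=
    ⟨_, tsub_add_cancel_of_le (Finsupp.single_le_iff.mpr hi)⟩
  obtain ⟨d, hb⟩ : ∃ d, d + Finsupp.single j 1 = b :=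
    ⟨_, tsub_add_cancel_of_le (Finsupp.single_le_iff.mpr hbj)⟩
  obtain ⟨c, hcdef⟩ : ∃ c, c = a' + Finsupp.single j (q - 2) := ⟨_, rfl⟩
  have hq1 : q - 2 + 1 = q - 1 := by omega
  have hc1 : c + Finsupp.single j 1 = a' + Finsupp.single j (q - 1) := by
    rw [hcdef, add_assoc, ← Finsupp.single_add, hq1]
  -- the key analytic fact
  have key : ∀ x : Fin n → Kˣ,
      ((a.prod fun k e => ((∏ m, x m ^ ν k m : Kˣ) : K) ^ e) =
        (b.prod fun k e => ((∏ m, x m ^ ν k m : Kˣ) : K) ^ e)) ∧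
      (a.sum fun _ e => e) = (b.sum fun _ e => e) := by
    intro x
    set val : Fin s → K := fun k => ((∏ m, x m ^ ν k m : Kˣ) : K) with hval
    show ((a.prod fun k e => val k ^ e) = (b.prod fun k e => val k ^ e)) ∧
      (a.sum fun _ e => e) = (b.sum fun _ e => e)
    have hvne : ∀ k, val k ≠ 0 := fun k => Units.ne_zero _
    set ψ : MvPolynomial (Fin s) K →+* Polynomial K :=
      (eval₂Hom (Polynomial.C : K →+* Polynomial K)
        (fun k => Polynomial.C (val k) * Polynomial.X) : MvPolynomial (Fin s) K →+* Polynomial K)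
      with hψ
    have hmono : ∀ (v : Fin s →₀ ℕ) (r : K),
        ψ (monomial v r) =
          Polynomial.C (r * v.prod fun k e => val k ^ e) *
            Polynomial.X ^ (v.sum fun _ e => e) := by
      intro v r
      rw [hψ, eval₂Hom_monomial]
      simp only [Finsupp.prod, Finsupp.sum, mul_pow, Finset.prod_mul_distrib,
        Finset.prod_pow_eq_pow_sum, map_mul, map_prod, map_pow]
      ring
    have hker : toricVanishingIdeal K ν ≤ RingHom.ker ψ := by
      rw [toricVanishingIdeal, Ideal.span_le]
      rintro p ⟨⟨dd, hdd⟩, hvan⟩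
      have hps : ψ p = ∑ v ∈ p.support,
          Polynomial.C (coeff v p * v.prod fun k e => val k ^ e) * Polynomial.X ^ dd := by
        conv_lhs => rw [p.as_sum]
        rw [map_sum]
        apply Finset.sum_congr rfl
        intro v hv
        have h1 : (v.sum fun _ e => e) = dd := by
          have h2 := hdd (mem_support_iff.mp hv)
          rw [show (Finsupp.weight (1 : Fin s → ℕ)) = Finsupp.degree from
              (Finsupp.degree_eq_weight_one).symm] at h2
          exact h2
        rw [hmono, h1]
      have hev : eval val p = ∑ v ∈ p.support,
          coeff v p * v.prod fun k e => val k ^ e := by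
        rw [eval_eq]
        exact Finset.sum_congr rfl fun v hv => by rw [Finsupp.prod]
      have hp : ψ p = Polynomial.C (eval val p) * Polynomial.X ^ dd := by
        rw [hps, ← Finset.sum_mul, ← map_sum, hev]
      have h0 : eval val p = 0 := hvan x
      simp only [SetLike.mem_coe, RingHom.mem_ker]
      rw [hp, h0, map_zero, zero_mul]
    have hψ0 : ψ (monomial a 1 - monomial b 1) = 0 := hker hf
    rw [map_sub, hmono, hmono, sub_eq_zero, one_mul, one_mul] at hψ0
    have h2 := congrArg (fun P => Polynomial.coeff P (a.sum fun _ e => e)) hψ0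
    have hPa : (a.prod fun k e => val k ^ e) ≠ 0 := by
      rw [Finsupp.prod]
      exact Finset.prod_ne_zero_iff.mpr fun k _ => pow_ne_zero _ (hvne k)
    simp only [Polynomial.coeff_C_mul, Polynomial.coeff_X_pow] at h2
    simp only [if_true, mul_one] at h2
    by_cases hnn : (a.sum fun _ e => e) = (b.sum fun _ e => e)
    · rw [if_pos hnn, mul_one] at h2
      exact ⟨h2, hnn⟩
    · rw [if_neg hnn, mul_zero] at h2
      exact absurd h2 hPa
  have hdeg : (a.sum fun _ e => e) = (b.sum fun _ e => e) := (key fun _ => 1).2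
  -- degree bookkeeping
  have hdega : (a.sum fun _ e => e) = (a'.sum fun _ e => e) + (q - 1) := by
    rw [← ha, Finsupp.sum_add_index' (fun _ => rfl) (fun _ _ _ => rfl),
      Finsupp.sum_single_index rfl]
  have hdegb : (b.sum fun _ e => e) = (d.sum fun _ e => e) + 1 := by
    rw [← hb, Finsupp.sum_add_index' (fun _ => rfl) (fun _ _ _ => rfl),
      Finsupp.sum_single_index rfl]
  have hdegc : (c.sum fun _ e => e) = (a'.sum fun _ e => e) + (q - 2) := by
    rw [hcdef, Finsupp.sum_add_index' (fun _ => rfl) (fun _ _ _ => rfl),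
      Finsupp.sum_single_index rfl]
  have hdegcd : (c.sum fun _ e => e) = (d.sum fun _ e => e) := by omega
  refine ⟨c, d, j, ?_, ?_, ?_⟩
  · -- g ∈ I(X)
    apply Ideal.subset_span
    constructor
    · exact ⟨c.sum fun _ e => e,
        (isHomogeneous_monomial 1 rfl).sub (isHomogeneous_monomial 1 hdegcd.symm)⟩
    · intro x
      set val : Fin s → K := fun k => ((∏ m, x m ^ ν k m : Kˣ) : K) with hval
      show eval val (monomial c 1 - monomial d 1) = 0
      have hvne : ∀ k, val k ≠ 0 := fun k => Units.ne_zero _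
      have hv1 : ∀ k, val k ^ (q - 1) = 1 := by
        intro k
        rw [← hcard]
        exact FiniteField.pow_card_sub_one_eq_one _ (hvne k)
      have hPadd : ∀ u v : Fin s →₀ ℕ,
          ((u + v).prod fun k e => val k ^ e) =
            (u.prod fun k e => val k ^ e) * (v.prod fun k e => val k ^ e) :=
        fun u v => Finsupp.prod_add_index' (fun k => pow_zero _) (fun k e e' => pow_add _ _ _)
      have hPsingle : ∀ (k : Fin s) (m : ℕ),
          ((Finsupp.single k m).prod fun k e => val k ^ e) = val k ^ m :=
        fun k m => Finsupp.prod_single_index (pow_zero _)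
      have hkey : (a.prod fun k e => val k ^ e) = (b.prod fun k e => val k ^ e) := (key x).1
      have hmul : ((c.prod fun k e => val k ^ e)) * val j =
          ((d.prod fun k e => val k ^ e)) * val j := by
        calc (c.prod fun k e => val k ^ e) * val j
            = ((c + Finsupp.single j 1).prod fun k e => val k ^ e) := by
              rw [hPadd, hPsingle, pow_one]
          _ = ((a' + Finsupp.single j (q - 1)).prod fun k e => val k ^ e) := by rw [hc1]
          _ = (a'.prod fun k e => val k ^ e) := by rw [hPadd, hPsingle, hv1, mul_one]
          _ = (a.prod fun k e => val k ^ e) := by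
              rw [← ha, hPadd, hPsingle, hv1, mul_one]
          _ = (b.prod fun k e => val k ^ e) := hkey
          _ = ((d + Finsupp.single j 1).prod fun k e => val k ^ e) := by rw [hb]
          _ = (d.prod fun k e => val k ^ e) * val j := by rw [hPadd, hPsingle, pow_one]
      have hcd := mul_right_cancel₀ (hvne j) hmul
      rw [map_sub, eval_monomial, eval_monomial, one_mul, one_mul, hcd, sub_self]
  · -- degree drop
    by_cases hcd : c = d
    · left; rw [hcd, sub_self]
    · right
      have hane : a ≠ b := by
        intro h
        rw [h] at hdisj
        have hempty : b.support = ∅ := by simpa using disjoint_self.mp hdisj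
        rw [hempty] at hj
        exact absurd hj (Finset.notMem_empty j)
      have hlow : (a.sum fun _ e => e) ≤
          (monomial a 1 - monomial b 1 : MvPolynomial (Fin s) K).totalDegree := by
        apply le_totalDegree
        rw [mem_support_iff, coeff_sub, coeff_monomial, if_pos rfl,
          coeff_monomial, if_neg (fun h => hane h.symm), sub_zero]
        exact one_ne_zero
      have hhigh : (monomial c 1 - monomial d 1 : MvPolynomial (Fin s) K).totalDegree ≤
          (c.sum fun _ e => e) := by
        have hsplit : (monomial c 1 - monomial d 1 : MvPolynomial (Fin s) K) =
            monomial c 1 + monomial d (-1) := by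
          rw [map_neg (monomial d) 1]
          ring
        rw [hsplit]
        refine le_trans (totalDegree_add _ _) ?_
        rw [totalDegree_monomial _ (one_ne_zero : (1 : K) ≠ 0),
          totalDegree_monomial _ (neg_ne_zero.mpr (one_ne_zero : (1 : K) ≠ 0)), ← hdegcd]
        simp
      have : (c.sum fun _ e => e) < (a.sum fun _ e => e) := by omega
      omega
  · -- relations
    have hX : (X j : MvPolynomial (Fin s) K) = monomial (Finsupp.single j 1) 1 := rfl
    have heq : (monomial a 1 - monomial b 1 : MvPolynomial (Fin s) K) -
        X j * (monomial c 1 - monomial d 1) =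
        monomial a' 1 * (X i ^ (q - 1) - X j ^ (q - 1)) := by
      have h1 : (monomial a 1 : MvPolynomial (Fin s) K) =
          monomial a' 1 * X i ^ (q - 1) := by
        rw [X_pow_eq_monomial, monomial_mul, ha, one_mul]
      have h2 : (X j : MvPolynomial (Fin s) K) * monomial c 1 =
          monomial a' 1 * X j ^ (q - 1) := by
        rw [X_pow_eq_monomial, hX, monomial_mul, monomial_mul,
          add_comm (Finsupp.single j 1) c, hc1]
      have h3 : (X j : MvPolynomial (Fin s) K) * monomial d 1 = monomial b 1 := by
        rw [hX, monomial_mul, one_mul, add_comm (Finsupp.single j 1) d, hb]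
      rw [mul_sub, h2, h3, h1]
      ring
    rw [heq]
    exact Ideal.mul_mem_left _ _ (Ideal.subset_span ⟨i, j, rfl⟩)
end
end

section
/- Let X^* ⊆ (K^*)^s be the algebraic toric set parameterized by ν_1,…,ν_s ∈ ℕ^n and I(X) ⊆ S its vanishing ideal. Then there exists a finite set F of binomials t^a − t^b with |a| = |b|, supp(a) ∩ supp(b) = ∅, and a_i ≤ q−2 and b_i ≤ q−2 for all 1 ≤ i ≤ s, such that I(X) is generated as an ideal by F ∪ {t_i^{q−1} − t_j^{q−1} : 1 ≤ i, j ≤ s}. -/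
open MvPolynomial

noncomputable section

set_option linter.unusedSectionVars false
set_option linter.unusedVariables false
set_option maxHeartbeats 1000000

namespace ToricProofAux

variable {K : Type} [Field K] [Fintype K] {n s : ℕ}

def ptu (ν : Fin s → Fin n → ℕ) (x : Fin n → Kˣ) (i : Fin s) : Kˣ := ∏ j, x j ^ ν i j

def pt (ν : Fin s → Fin n → ℕ) (x : Fin n → Kˣ) (i : Fin s) : K := ptu ν x i

def chi (ν : Fin s → Fin n → ℕ) (m : Fin s →₀ ℕ) (x : Fin n → Kˣ) : K :=
  ∏ i, pt ν x i ^ m i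

lemma pt_ne_zero (ν : Fin s → Fin n → ℕ) (x : Fin n → Kˣ) (i : Fin s) : pt ν x i ≠ 0 :=
  Units.ne_zero (ptu ν x i)

lemma chi_ne_zero (ν : Fin s → Fin n → ℕ) (m : Fin s →₀ ℕ) (x : Fin n → Kˣ) :
    chi ν m x ≠ 0 :=
  Finset.prod_ne_zero_iff.mpr fun i _ => pow_ne_zero _ (pt_ne_zero ν x i)

lemma chi_add (ν : Fin s → Fin n → ℕ) (a b : Fin s →₀ ℕ) (x : Fin n → Kˣ) :
    chi ν (a + b) x = chi ν a x * chi ν b x := by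
  simp [chi, Finsupp.add_apply, pow_add, Finset.prod_mul_distrib]

lemma chi_single (ν : Fin s → Fin n → ℕ) (i : Fin s) (c : ℕ) (x : Fin n → Kˣ) :
    chi ν (Finsupp.single i c) x = pt ν x i ^ c := by
  rw [chi, Finset.prod_eq_single i
    (fun k _ hk => by rw [Finsupp.single_eq_of_ne' (Ne.symm hk), pow_zero])
    (fun h => absurd (Finset.mem_univ i) h), Finsupp.single_eq_same]

lemma sum_single_fin (i : Fin s) (c : ℕ) :
    (∑ k, (Finsupp.single i c : Fin s →₀ ℕ) k) = c := by
  rw [Finset.sum_eq_single i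
    (fun k _ hk => Finsupp.single_eq_of_ne' (Ne.symm hk))
    (fun h => absurd (Finset.mem_univ i) h), Finsupp.single_eq_same]

lemma sum_add_fin (a b : Fin s →₀ ℕ) : (∑ i, (a + b) i) = (∑ i, a i) + ∑ i, b i := by
  simp [Finsupp.add_apply, Finset.sum_add_distrib]

lemma pt_pow {q : ℕ} (hcard : Fintype.card K = q) (ν : Fin s → Fin n → ℕ)
    (x : Fin n → Kˣ) (i : Fin s) : pt ν x i ^ (q - 1) = 1 := by
  classical
  have h : (ptu ν x i) ^ (q - 1) = 1 := by
    rw [← hcard, ← Fintype.card_units]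
    exact pow_card_eq_one
  rw [pt, ← Units.val_pow_eq_pow_val, h, Units.val_one]

def chiHom (ν : Fin s → Fin n → ℕ) (m : Fin s →₀ ℕ) : (Fin n → Kˣ) →* K where
  toFun := chi ν m
  map_one' := by simp [chi, pt, ptu]
  map_mul' x y := by
    have hpt : ∀ i, pt ν (x * y) i = pt ν x i * pt ν y i := by
      intro i
      simp [pt, ptu, Pi.mul_apply, mul_pow, Finset.prod_mul_distrib]
    simp [chi, hpt, mul_pow, Finset.prod_mul_distrib]

lemma chiHom_apply (ν : Fin s → Fin n → ℕ) (m : Fin s →₀ ℕ) (x : Fin n → Kˣ) :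
    chiHom ν m x = chi ν m x := rfl

variable (q : ℕ) (ν : Fin s → Fin n → ℕ)

/-- The small binomials. -/
def Fset : Set (MvPolynomial (Fin s) K) :=
  {p | ∃ a b : Fin s →₀ ℕ, p = monomial a 1 - monomial b 1 ∧ (∑ i, a i) = (∑ i, b i) ∧
    Disjoint a.support b.support ∧ (∀ i, a i ≤ q - 2) ∧ (∀ i, b i ≤ q - 2) ∧
    ∀ x : Fin n → Kˣ, chi ν a x = chi ν b x}

/-- The toric relations. -/
def Tset : Set (MvPolynomial (Fin s) K) :=
  {p | ∃ i j : Fin s, p = X i ^ (q - 1) - X j ^ (q - 1)}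

/-- The span of the generators. -/
def Jspan : Ideal (MvPolynomial (Fin s) K) := Ideal.span (Fset q ν ∪ Tset (K := K) (s := s) q)

lemma strip {d : ℕ}
    (IH : ∀ d' < d, ∀ a b : Fin s →₀ ℕ, (∑ i, a i) = d' → (∑ i, b i) = d' →
      (∀ x : Fin n → Kˣ, chi ν a x = chi ν b x) →
      monomial a (1 : K) - monomial b 1 ∈ Jspan (K := K) q ν)
    (a b : Fin s →₀ ℕ) (ha : (∑ i, a i) = d) (hb : (∑ i, b i) = d)
    (hchi : ∀ x : Fin n → Kˣ, chi ν a x = chi ν b x) (i : Fin s) (hi : 0 < min (a i) (b i)) :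
    monomial a (1 : K) - monomial b 1 ∈ Jspan (K := K) q ν := by
  set c : Fin s →₀ ℕ := a ⊓ b with hc
  have hca : c ≤ a := inf_le_left
  have hcb : c ≤ b := inf_le_right
  have haa : (a - c) + c = a := tsub_add_cancel_of_le hca
  have hbb : (b - c) + c = b := tsub_add_cancel_of_le hcb
  have hci : 0 < c i := by rw [hc, Finsupp.inf_apply]; exact hi
  have hsc : 0 < ∑ k, c k :=
    lt_of_lt_of_le hci (Finset.single_le_sum (fun k _ => Nat.zero_le _) (Finset.mem_univ i))
  have hsa : (∑ k, (a - c) k) + (∑ k, c k) = d := by rw [← sum_add_fin, haa, ha]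
  have hsb : (∑ k, (b - c) k) + (∑ k, c k) = d := by rw [← sum_add_fin, hbb, hb]
  have hd0 : 0 < d := by omega
  have hchi' : ∀ x : Fin n → Kˣ, chi ν (a - c) x = chi ν (b - c) x := by
    intro x
    have h1 : chi ν (a - c) x * chi ν c x = chi ν (b - c) x * chi ν c x := by
      rw [← chi_add, ← chi_add, haa, hbb]; exact hchi x
    exact mul_right_cancel₀ (chi_ne_zero ν c x) h1
  have hmem := IH (d - ∑ k, c k) (Nat.sub_lt hd0 hsc) (a - c) (b - c)
    (by omega) (by omega) hchi'
  have heq : monomial a (1 : K) - monomial b 1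
      = monomial c 1 * (monomial (a - c) 1 - monomial (b - c) 1) := by
    rw [mul_sub, monomial_mul, monomial_mul, one_mul, add_comm c (a - c), haa,
      add_comm c (b - c), hbb]
  rw [heq]
  exact Ideal.mul_mem_left _ _ hmem

lemma bigstep {d : ℕ} (hq : 2 < q) (hcard : Fintype.card K = q)
    (IH : ∀ d' < d, ∀ a b : Fin s →₀ ℕ, (∑ i, a i) = d' → (∑ i, b i) = d' →
      (∀ x : Fin n → Kˣ, chi ν a x = chi ν b x) →
      monomial a (1 : K) - monomial b 1 ∈ Jspan (K := K) q ν)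
    (a b : Fin s →₀ ℕ) (ha : (∑ i, a i) = d) (hb : (∑ i, b i) = d)
    (hchi : ∀ x : Fin n → Kˣ, chi ν a x = chi ν b x) (i : Fin s) (hia : q - 1 ≤ a i) :
    monomial a (1 : K) - monomial b 1 ∈ Jspan (K := K) q ν := by
  have hd : q - 1 ≤ d := ha ▸ le_trans hia
    (Finset.single_le_sum (fun k _ => Nat.zero_le _) (Finset.mem_univ i))
  obtain ⟨j, hj⟩ : ∃ j, 0 < b j := by
    by_contra h
    push_neg at h
    have h0 : (∑ k, b k) = 0 := Finset.sum_eq_zero fun k _ => Nat.le_zero.mp (h k)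
    omega
  set e : Fin s →₀ ℕ := a - Finsupp.single i (q - 1) with he
  have hea : e + Finsupp.single i (q - 1) = a :=
    tsub_add_cancel_of_le (Finsupp.single_le_iff.mpr hia)
  set a'' : Fin s →₀ ℕ := e + Finsupp.single j (q - 1) with ha''
  have h1 : monomial a (1 : K) - monomial a'' 1 ∈ Jspan (K := K) q ν := by
    have heq : monomial a (1 : K) - monomial a'' 1
        = monomial e 1 * ((X i) ^ (q - 1) - (X j) ^ (q - 1)) := by
      rw [mul_sub, X_pow_eq_monomial, X_pow_eq_monomial, monomial_mul, monomial_mul,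
        hea, ← ha'']
      norm_num
    rw [heq]
    exact Ideal.mul_mem_left _ _ (Ideal.subset_span (Or.inr ⟨i, j, rfl⟩))
  have hchi'' : ∀ x : Fin n → Kˣ, chi ν a'' x = chi ν b x := by
    intro x
    have h2 : chi ν a'' x = chi ν e x * pt ν x j ^ (q - 1) := by
      rw [ha'', chi_add, chi_single]
    have h3 : chi ν a x = chi ν e x * pt ν x i ^ (q - 1) := by
      rw [← hea, chi_add, chi_single]
    rw [h2, pt_pow hcard, ← hchi x, h3, pt_pow hcard]
  have hsa'' : (∑ k, a'' k) = d := by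
    have h4 : (∑ k, e k) + (q - 1) = d := by
      rw [← sum_single_fin i (q - 1), ← sum_add_fin, hea, ha]
    rw [ha'', sum_add_fin, sum_single_fin]
    omega
  have hmin : 0 < min (a'' j) (b j) := by
    have : a'' j = e j + (q - 1) := by rw [ha'', Finsupp.add_apply, Finsupp.single_eq_same]
    omega
  have h5 := strip q ν IH a'' b hsa'' hb hchi'' j hmin
  have heq2 : monomial a (1 : K) - monomial b 1
      = (monomial a 1 - monomial a'' 1) + (monomial a'' 1 - monomial b 1) :=
    (sub_add_sub_cancel _ _ _).symm
  rw [heq2]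
  exact Ideal.add_mem _ h1 h5

lemma binom_mem (hq : 2 < q) (hcard : Fintype.card K = q) :
    ∀ d, ∀ a b : Fin s →₀ ℕ, (∑ i, a i) = d → (∑ i, b i) = d →
      (∀ x : Fin n → Kˣ, chi ν a x = chi ν b x) →
      monomial a (1 : K) - monomial b 1 ∈ Jspan (K := K) q ν := by
  intro d
  induction d using Nat.strong_induction_on with
  | _ d IH =>
  intro a b ha hb hchi
  by_cases hab : a = b
  · rw [hab, sub_self]; exact zero_mem _
  by_cases hstrip : ∃ i, 0 < min (a i) (b i)
  · obtain ⟨i, hi⟩ := hstrip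
    exact strip q ν IH a b ha hb hchi i hi
  push_neg at hstrip
  have hdisj : ∀ k, a k = 0 ∨ b k = 0 := by
    intro k
    have h0 := Nat.le_zero.mp (hstrip k)
    exact Nat.min_eq_zero_iff.mp h0
  by_cases hbiga : ∃ i, q - 1 ≤ a i
  · obtain ⟨i, hi⟩ := hbiga
    exact bigstep q ν hq hcard IH a b ha hb hchi i hi
  by_cases hbigb : ∃ i, q - 1 ≤ b i
  · obtain ⟨i, hi⟩ := hbigb
    have h := bigstep q ν hq hcard IH b a hb ha (fun x => (hchi x).symm) i hi
    have heq : monomial a (1 : K) - monomial b 1 = -(monomial b 1 - monomial a 1) :=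
      (neg_sub _ _).symm
    rw [heq]
    exact neg_mem h
  push_neg at hbiga
  push_neg at hbigb
  apply Ideal.subset_span
  left
  refine ⟨a, b, rfl, ha.trans hb.symm, ?_, fun i => by have := hbiga i; omega,
    fun i => by have := hbigb i; omega, hchi⟩
  rw [Finset.disjoint_left]
  intro k hk hk'
  rw [Finsupp.mem_support_iff] at hk hk'
  rcases hdisj k with h | h
  · exact hk h
  · exact hk' h


lemma homog_sum_eq {f : MvPolynomial (Fin s) K} {d : ℕ} (hf : f.IsHomogeneous d)
    {m : Fin s →₀ ℕ} (hm : m ∈ f.support) : (∑ i, m i) = d := by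
  have h := hf (MvPolynomial.mem_support_iff.mp hm)
  have h2 : (Finsupp.weight 1) m = ∑ i ∈ m.support, m i := by
    rw [Pi.one_def, ← Finsupp.degree_eq_weight_one]
    rfl
  rw [h2] at h
  rw [← h]
  exact (Finset.sum_subset (Finset.subset_univ _)
    (fun k _ hk => Finsupp.notMem_support_iff.mp hk)).symm

lemma homog_mem (hq : 2 < q) (hcard : Fintype.card K = q)
    (f : MvPolynomial (Fin s) K) (d : ℕ) (hf : f.IsHomogeneous d)
    (hv : ∀ x : Fin n → Kˣ, eval (pt ν x) f = 0) : f ∈ Jspan (K := K) q ν := by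
  classical
  set Φ : (Fin s →₀ ℕ) → ((Fin n → Kˣ) →* K) := chiHom ν with hΦ
  set S0 := f.support.image Φ with hS0
  set g : ((Fin n → Kˣ) →* K) → K :=
    fun χ0 => ∑ m ∈ f.support.filter (fun m => Φ m = χ0), coeff m f with hg
  have hmaps : ∀ m ∈ f.support, Φ m ∈ S0 := fun m hm => Finset.mem_image_of_mem _ hm
  have hgzero : ∀ χ0 ∈ S0, g χ0 = 0 := by
    have hli := linearIndependent_monoidHom (Fin n → Kˣ) K
    refine fun χ0 h => linearIndependent_iff'.mp hli S0 g ?_ χ0 h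
    funext x
    rw [Finset.sum_apply, Pi.zero_apply]
    have hterm : ∀ χ0 ∈ S0, (g χ0 • ((χ0 : (Fin n → Kˣ) → K))) x
        = ∑ m ∈ f.support.filter (fun m => Φ m = χ0), coeff m f * Φ m x := by
      intro χ0 hχ0
      rw [Pi.smul_apply, smul_eq_mul, hg, Finset.sum_mul]
      exact Finset.sum_congr rfl fun m hm => by rw [(Finset.mem_filter.mp hm).2]
    rw [Finset.sum_congr rfl hterm,
      Finset.sum_fiberwise_of_maps_to hmaps (fun m => coeff m f * Φ m x)]
    have hev := hv x
    rw [eval_eq'] at hev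
    exact hev
  set r : ((Fin n → Kˣ) →* K) → (Fin s →₀ ℕ) :=
    fun χ0 => if h : ∃ m, m ∈ f.support ∧ Φ m = χ0 then h.choose else 0 with hr
  have hrmem : ∀ m ∈ f.support, r (Φ m) ∈ f.support ∧ Φ (r (Φ m)) = Φ m := by
    intro m hm
    have hex : ∃ m', m' ∈ f.support ∧ Φ m' = Φ m := ⟨m, hm, rfl⟩
    rw [hr]
    simp only [dif_pos hex]
    exact hex.choose_spec
  have hdec : f = ∑ m ∈ f.support, coeff m f • (monomial m (1 : K) - monomial (r (Φ m)) 1) := by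
    simp only [smul_sub]
    rw [Finset.sum_sub_distrib]
    have h1 : ∑ m ∈ f.support, coeff m f • monomial m (1 : K) = f := by
      conv_rhs => rw [f.as_sum]
      exact Finset.sum_congr rfl fun m _ => by rw [smul_monomial, smul_eq_mul, mul_one]
    have h2 : ∑ m ∈ f.support, coeff m f • monomial (r (Φ m)) (1 : K) = 0 := by
      rw [← Finset.sum_fiberwise_of_maps_to hmaps
        (fun m => coeff m f • monomial (r (Φ m)) (1 : K))]
      refine Finset.sum_eq_zero fun χ0 hχ0 => ?_
      have hterm : ∀ m ∈ f.support.filter (fun m => Φ m = χ0),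
          coeff m f • monomial (r (Φ m)) (1 : K) = coeff m f • monomial (r χ0) 1 :=
        fun m hm => by rw [(Finset.mem_filter.mp hm).2]
      rw [Finset.sum_congr rfl hterm, ← Finset.sum_smul]
      have : (∑ m ∈ f.support.filter (fun m => Φ m = χ0), coeff m f) = g χ0 := rfl
      rw [this, hgzero χ0 hχ0, zero_smul]
    rw [h1, h2, sub_zero]
  rw [hdec]
  refine Ideal.sum_mem _ fun m hm => ?_
  rw [smul_eq_C_mul]
  refine Ideal.mul_mem_left _ _ ?_
  obtain ⟨hrm, hrΦ⟩ := hrmem m hm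
  refine binom_mem q ν hq hcard d m (r (Φ m)) (homog_sum_eq hf hm) (homog_sum_eq hf hrm) ?_
  intro x
  exact (DFunLike.congr_fun hrΦ x).symm


lemma degree_eq_sum_univ (a : Fin s →₀ ℕ) : a.degree = ∑ i, a i :=
  Finset.sum_subset (Finset.subset_univ _) (fun k _ hk => Finsupp.notMem_support_iff.mp hk)

lemma Fset_finite : (Fset (K := K) q ν).Finite := by
  classical
  have hA : {a : Fin s →₀ ℕ | ∀ i, a i ≤ q - 2}.Finite := by
    have hsub : {a : Fin s →₀ ℕ | ∀ i, a i ≤ q - 2} ⊆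
        Finsupp.equivFunOnFinite ⁻¹' (Set.univ.pi fun _ : Fin s => Set.Iic (q - 2)) := by
      intro a ha
      simp only [Set.mem_preimage, Set.mem_pi, Set.mem_univ, Set.mem_Iic, forall_true_left]
      intro i
      exact ha i
    exact Set.Finite.subset
      ((Set.Finite.pi fun _ => Set.finite_Iic (q - 2)).preimage
        (Equiv.injective _).injOn) hsub
  apply Set.Finite.subset
    (Set.Finite.image (fun p : (Fin s →₀ ℕ) × (Fin s →₀ ℕ) =>
      monomial p.1 (1 : K) - monomial p.2 1) (hA.prod hA))
  rintro p ⟨a, b, rfl, -, -, h1, h2, -⟩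
  exact ⟨(a, b), ⟨h1, h2⟩, rfl⟩

lemma reverse_incl (hq : 2 < q) (hcard : Fintype.card K = q) :
    Jspan (K := K) q ν ≤ toricVanishingIdeal K ν := by
  rw [Jspan, Ideal.span_le]
  rintro p (hp | hp)
  · obtain ⟨a, b, rfl, hdeg, -, -, -, hchi⟩ := hp
    apply Ideal.subset_span
    refine ⟨⟨∑ i, a i, ?_⟩, ?_⟩
    · exact (isHomogeneous_monomial 1 (degree_eq_sum_univ a)).sub
        (isHomogeneous_monomial 1 ((degree_eq_sum_univ b).trans hdeg.symm))
    · intro x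
      rw [map_sub, eval_monomial, eval_monomial, one_mul, one_mul,
        Finsupp.prod_pow, Finsupp.prod_pow]
      exact sub_eq_zero_of_eq (hchi x)
  · obtain ⟨i, j, rfl⟩ := hp
    apply Ideal.subset_span
    refine ⟨⟨q - 1, (isHomogeneous_X_pow i (q - 1)).sub (isHomogeneous_X_pow j (q - 1))⟩, ?_⟩
    intro x
    rw [map_sub, map_pow, map_pow, eval_X, eval_X]
    show pt ν x i ^ (q - 1) - pt ν x j ^ (q - 1) = 0
    rw [pt_pow hcard, pt_pow hcard, sub_self]

lemma forward_incl (hq : 2 < q) (hcard : Fintype.card K = q) :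
    toricVanishingIdeal K ν ≤ Jspan (K := K) q ν := by
  rw [toricVanishingIdeal, Ideal.span_le]
  rintro f ⟨⟨d, hd⟩, hv⟩
  exact homog_mem q ν hq hcard f d hd hv

end ToricProofAux

/-- There is a finite set `F` of homogeneous binomials `t^a − t^b` with
`supp(a) ∩ supp(b) = ∅` and all exponents `≤ q−2`, such that `I(X)` is generated by
`F` together with the toric relations `t_i^{q−1} − t_j^{q−1}`. -/
theorem generators_with_small_exponents
    (q n s : ℕ) (hq : 2 < q) (hs : 2 ≤ s) (K : Type) [Field K] [Fintype K]
    (hcard : Fintype.card K = q)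
    (ν : Fin s → Fin n → ℕ) :
    ∃ F : Set (MvPolynomial (Fin s) K), F.Finite ∧
      (∀ f ∈ F, ∃ a b : Fin s →₀ ℕ,
        f = monomial a 1 - monomial b 1 ∧
        (∑ i, a i) = (∑ i, b i) ∧
        Disjoint a.support b.support ∧
        (∀ i, a i ≤ q - 2) ∧ (∀ i, b i ≤ q - 2)) ∧
      toricVanishingIdeal K ν = Ideal.span
        (F ∪ {p : MvPolynomial (Fin s) K |
          ∃ i j : Fin s, p = X i ^ (q - 1) - X j ^ (q - 1)}) := by
  refine ⟨ToricProofAux.Fset q ν, ToricProofAux.Fset_finite q ν, ?_, ?_⟩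
  · rintro f ⟨a, b, rfl, h1, h2, h3, h4, -⟩
    exact ⟨a, b, rfl, h1, h2, h3, h4⟩
  · have h := le_antisymm (ToricProofAux.forward_incl q ν hq hcard)
      (ToricProofAux.reverse_incl q ν hq hcard)
    rw [h]
    rfl
end
end

section
/- Let X^* ⊆ (K^*)^s be the algebraic toric set parameterized by ν_1,…,ν_s ∈ ℕ^n and I(X) ⊆ S its vanishing ideal. Suppose s ≥ 4 and set k = ⌊s/2⌋. Then I(X) is generated as an ideal by a set of polynomials each of total degree at most k(q−2). -/
open MvPolynomial

noncomputable section

namespace ToricAux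


set_option linter.unusedSectionVars false

variable {K : Type} [Field K] [Fintype K] {n s : ℕ}

variable (K) in
/-- evaluation point coordinates -/
def ev (ν : Fin s → Fin n → ℕ) (x : Fin n → Kˣ) (i : Fin s) : K :=
  ((∏ j, x j ^ ν i j : Kˣ) : K)

lemma ev_mul (ν : Fin s → Fin n → ℕ) (x y : Fin n → Kˣ) (i : Fin s) :
    ev K ν (x * y) i = ev K ν x i * ev K ν y i := by
  unfold ev
  have : (∏ j, (x j * y j) ^ ν i j : Kˣ)
      = (∏ j, x j ^ ν i j) * (∏ j, y j ^ ν i j) := by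
    rw [← Finset.prod_mul_distrib]
    exact Finset.prod_congr rfl fun j _ => mul_pow _ _ _
  show ((∏ j, (x j * y j) ^ ν i j : Kˣ) : K) = _
  rw [this]; push_cast; rfl

lemma ev_ne_zero (ν : Fin s → Fin n → ℕ) (x : Fin n → Kˣ) (i : Fin s) :
    ev K ν x i ≠ 0 := Units.ne_zero _

variable (K) in
/-- the character attached to an exponent vector -/
def chi (ν : Fin s → Fin n → ℕ) (a : Fin s →₀ ℕ) : (Fin n → Kˣ) →* K where
  toFun x := ∏ i, ev K ν x i ^ a i
  map_one' := by simp [ev]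
  map_mul' x y := by
    show ∏ i, ev K ν (x * y) i ^ a i = (∏ i, ev K ν x i ^ a i) * ∏ i, ev K ν y i ^ a i
    rw [← Finset.prod_mul_distrib]
    exact Finset.prod_congr rfl fun i _ => by rw [ev_mul, mul_pow]

lemma chi_apply (ν : Fin s → Fin n → ℕ) (a : Fin s →₀ ℕ) (x : Fin n → Kˣ) :
    chi K ν a x = ∏ i, ev K ν x i ^ a i := rfl

lemma chi_ne_zero (ν : Fin s → Fin n → ℕ) (a : Fin s →₀ ℕ) (x : Fin n → Kˣ) :
    chi K ν a x ≠ 0 := by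
  rw [chi_apply]
  exact Finset.prod_ne_zero_iff.mpr fun i _ => pow_ne_zero _ (ev_ne_zero ν x i)

lemma chi_add (ν : Fin s → Fin n → ℕ) (a b : Fin s →₀ ℕ) (x : Fin n → Kˣ) :
    chi K ν (a + b) x = chi K ν a x * chi K ν b x := by
  simp [chi_apply, Finsupp.add_apply, pow_add, Finset.prod_mul_distrib]

lemma chi_single (ν : Fin s → Fin n → ℕ) (i : Fin s) (p : ℕ) (x : Fin n → Kˣ) :
    chi K ν (Finsupp.single i p) x = ev K ν x i ^ p := by
  rw [chi_apply]
  rw [Finset.prod_eq_single_of_mem i (Finset.mem_univ i)]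
  · simp
  · intro k _ hk
    simp [Finsupp.single_apply, (Ne.symm hk : ¬ i = k)]

lemma eval_binom (ν : Fin s → Fin n → ℕ) (a b : Fin s →₀ ℕ) (x : Fin n → Kˣ) :
    eval (ev K ν x) (monomial a (1:K) - monomial b 1)
      = chi K ν a x - chi K ν b x := by
  simp [eval_monomial, chi_apply, Finsupp.prod_pow]

lemma degree_eq (a : Fin s →₀ ℕ) : a.degree = ∑ i, a i :=
  Finset.sum_subset (Finset.subset_univ _)
    (fun i _ h => Finsupp.notMem_support_iff.mp h)

lemma sum_single (i : Fin s) (p : ℕ) : (∑ k, Finsupp.single i p k) = p := by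
  simp [Finsupp.single_apply]

variable (K) in
/-- the generating set: homogeneous vanishing polys of bounded degree -/
def Fgen (ν : Fin s → Fin n → ℕ) (q : ℕ) : Set (MvPolynomial (Fin s) K) :=
  {f | ((∃ d, f.IsHomogeneous d) ∧ ∀ x : Fin n → Kˣ, eval (ev K ν x) f = 0) ∧
    f.totalDegree ≤ (s / 2) * (q - 2)}

lemma binom_mem_Fgen (ν : Fin s → Fin n → ℕ) (q : ℕ) {a b : Fin s →₀ ℕ} {d : ℕ}
    (ha : (∑ i, a i) = d) (hb : (∑ i, b i) = d) (hd : d ≤ (s / 2) * (q - 2))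
    (hx : ∀ x, chi K ν a x = chi K ν b x) :
    monomial a (1:K) - monomial b 1 ∈ Fgen K ν q := by
  have hhom : (monomial a (1:K) - monomial b 1).IsHomogeneous d := by
    apply MvPolynomial.IsHomogeneous.sub
    · exact isHomogeneous_monomial _ ((degree_eq a).trans ha)
    · exact isHomogeneous_monomial _ ((degree_eq b).trans hb)
  refine ⟨⟨⟨d, hhom⟩, fun x => ?_⟩, le_trans hhom.totalDegree_le hd⟩
  rw [eval_binom, hx, sub_self]

/-- cancelling a common factor -/
lemma cancel_step (ν : Fin s → Fin n → ℕ) (I : Ideal (MvPolynomial (Fin s) K))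
    {c a b : Fin s →₀ ℕ} (hca : c ≤ a) (hcb : c ≤ b)
    (h : monomial (a - c) (1:K) - monomial (b - c) 1 ∈ I) :
    monomial a (1:K) - monomial b 1 ∈ I := by
  have key : monomial a (1:K) - monomial b 1
      = monomial c 1 * (monomial (a - c) (1:K) - monomial (b - c) 1) := by
    rw [mul_sub, monomial_mul, monomial_mul, one_mul,
      add_tsub_cancel_of_le hca, add_tsub_cancel_of_le hcb]
  rw [key]
  exact Ideal.mul_mem_left _ _ h

lemma chi_cancel (ν : Fin s → Fin n → ℕ) {c a b : Fin s →₀ ℕ}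
    (hca : c ≤ a) (hcb : c ≤ b)
    (hx : ∀ x : Fin n → Kˣ, chi K ν a x = chi K ν b x) (x : Fin n → Kˣ) :
    chi K ν (a - c) x = chi K ν (b - c) x := by
  have h1 : chi K ν (a - c) x * chi K ν c x = chi K ν (b - c) x * chi K ν c x := by
    rw [← chi_add, ← chi_add, tsub_add_cancel_of_le hca, tsub_add_cancel_of_le hcb]
    exact hx x
  exact mul_right_cancel₀ (chi_ne_zero ν c x) h1

lemma sum_sub_single {a : Fin s →₀ ℕ} {i : Fin s} {p : ℕ} (h : p ≤ a i) :
    (∑ k, (a - Finsupp.single i p) k) = (∑ k, a k) - p := by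
  have hle : Finsupp.single i p ≤ a := Finsupp.single_le_iff.mpr h
  have := tsub_add_cancel_of_le hle
  have hsum : (∑ k, (a - Finsupp.single i p) k) + (∑ k, Finsupp.single i p k)
      = ∑ k, a k := by
    rw [← Finset.sum_add_distrib]
    exact Finset.sum_congr rfl fun k _ => by
      rw [← Finsupp.add_apply, this]
  rw [sum_single] at hsum
  omega

lemma ev_pow_card (ν : Fin s → Fin n → ℕ) (q : ℕ) (hcard : Fintype.card K = q)
    (x : Fin n → Kˣ) (i : Fin s) : ev K ν x i ^ (q - 1) = 1 := by
  subst hcard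
  exact FiniteField.pow_card_sub_one_eq_one _ (ev_ne_zero ν x i)

/-- the core step in the disjoint-support, high-degree case, assuming `a` has small support -/
lemma core_step (ν : Fin s → Fin n → ℕ) (q : ℕ) (hq : 2 < q) (hs : 4 ≤ s)
    (hcard : Fintype.card K = q) {d : ℕ}
    (IH : ∀ d' < d, ∀ a b : Fin s →₀ ℕ, (∑ i, a i) = d' → (∑ i, b i) = d' →
      (∀ x, chi K ν a x = chi K ν b x) →
      monomial a (1:K) - monomial b 1 ∈ Ideal.span (Fgen K ν q))
    {a b : Fin s →₀ ℕ}
    (ha : (∑ i, a i) = d) (hb : (∑ i, b i) = d)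
    (hx : ∀ x, chi K ν a x = chi K ν b x)
    (hdisj : ∀ i, a i = 0 ∨ b i = 0)
    (hbig : (s / 2) * (q - 2) < d)
    (hsupp : a.support.card ≤ s / 2) :
    monomial a (1:K) - monomial b 1 ∈ Ideal.span (Fgen K ν q) := by
  -- find i with a i ≥ q - 1
  have hex : ∃ i, q - 1 ≤ a i := by
    by_contra hcon
    push_neg at hcon
    have : d ≤ a.support.card * (q - 2) := by
      calc d = ∑ i ∈ a.support, a i := by rw [← ha, ← degree_eq]; rfl
        _ ≤ a.support.card * (q - 2) := by
          rw [← smul_eq_mul]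
          exact Finset.sum_le_card_nsmul _ _ _ (fun i _ => by have := hcon i; omega)
    have h2 : a.support.card * (q - 2) ≤ (s / 2) * (q - 2) :=
      Nat.mul_le_mul_right _ hsupp
    omega
  obtain ⟨i, hi⟩ := hex
  -- find j with b j ≥ 1
  have hdpos : 0 < d := by
    have : 2 ≤ s / 2 := by omega
    have : 1 ≤ q - 2 := by omega
    nlinarith [Nat.le_of_lt hbig]
  have hexj : ∃ j, 1 ≤ b j := by
    by_contra hcon
    push_neg at hcon
    have : (∑ i, b i) = 0 := Finset.sum_eq_zero fun j _ => by have := hcon j; omega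
    omega
  obtain ⟨j, hj⟩ := hexj
  have hai : a i ≠ 0 := by omega
  have hij : i ≠ j := by
    intro h
    subst h
    rcases hdisj i with h1 | h1 <;> omega
  have haj : a j = 0 := by rcases hdisj j with h1 | h1 <;> omega
  set p := q - 1 with hp
  have hp2 : 2 ≤ p := by omega
  set ei := Finsupp.single i p with hei
  set ej := Finsupp.single j p with hej
  have hle : ei ≤ a := Finsupp.single_le_iff.mpr hi
  set a' := a - ei + ej with ha'
  -- the q-1 binomial is in Fgen
  have hpbound : p ≤ (s / 2) * (q - 2) := by
    have h2 : 2 ≤ s / 2 := by omega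
    calc p ≤ 2 * (q - 2) := by omega
      _ ≤ (s / 2) * (q - 2) := Nat.mul_le_mul_right _ h2
  have hpd : p ≤ d := le_trans hpbound (le_of_lt hbig)
  have hqbin : monomial ei (1:K) - monomial ej 1 ∈ Fgen K ν q := by
    apply binom_mem_Fgen ν q (sum_single i p) (sum_single j p) hpbound
    intro x
    rw [chi_single, chi_single, ev_pow_card ν q hcard, ev_pow_card ν q hcard]
  -- chi a' = chi b
  have hchi_a' : ∀ x, chi K ν a' x = chi K ν b x := by
    intro x
    have h1 : chi K ν a' x = chi K ν (a - ei) x * chi K ν ej x := chi_add ν _ _ x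
    have h2 : chi K ν a x = chi K ν (a - ei) x * chi K ν ei x := by
      conv_lhs => rw [← tsub_add_cancel_of_le hle]
      exact chi_add ν _ _ x
    rw [h1, hej, chi_single, ev_pow_card ν q hcard, ← hx x, h2, hei, chi_single,
      ev_pow_card ν q hcard]
  -- degree of a'
  have hsa' : (∑ k, a' k) = d := by
    have h1 : (∑ k, (a - ei + ej) k) = (∑ k, (a - ei) k) + ∑ k, ej k := by
      simp [Finsupp.add_apply, Finset.sum_add_distrib]
    have h2 : (∑ k, (a - ei) k) = d - p := by rw [hei, sum_sub_single hi, ha]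
    rw [ha', h1, h2, hej, sum_single]
    omega
  -- value of a' at j
  have ha'j : a' j = p := by
    rw [ha', Finsupp.add_apply, Finsupp.tsub_apply, hei, hej,
      Finsupp.single_apply, Finsupp.single_apply]
    simp [hij, haj]
  -- the key identity
  have key : monomial a (1:K) - monomial b 1
      = monomial (a - ei) 1 * (monomial ei (1:K) - monomial ej 1)
        + (monomial a' 1 - monomial b 1) := by
    rw [mul_sub, monomial_mul, monomial_mul, one_mul,
      tsub_add_cancel_of_le hle, ← ha']
    ring
  rw [key]
  apply add_mem
  · exact Ideal.mul_mem_left _ _ (Ideal.subset_span hqbin)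
  · -- cancel at j and use IH
    set m := min p (b j) with hm
    have hm1 : 1 ≤ m := by omega
    have hma' : m ≤ a' j := by omega
    have hmb : m ≤ b j := by omega
    apply cancel_step ν _ (Finsupp.single_le_iff.mpr hma')
      (Finsupp.single_le_iff.mpr hmb)
    apply IH (d - m) (by omega)
    · rw [sum_sub_single hma', hsa']
    · rw [sum_sub_single hmb, hb]
    · exact fun x => chi_cancel ν (Finsupp.single_le_iff.mpr hma')
        (Finsupp.single_le_iff.mpr hmb) hchi_a' x

lemma binom_mem_span (ν : Fin s → Fin n → ℕ) (q : ℕ) (hq : 2 < q) (hs : 4 ≤ s)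
    (hcard : Fintype.card K = q) :
    ∀ d (a b : Fin s →₀ ℕ), (∑ i, a i) = d → (∑ i, b i) = d →
      (∀ x, chi K ν a x = chi K ν b x) →
      monomial a (1:K) - monomial b 1 ∈ Ideal.span (Fgen K ν q) := by
  intro d
  induction d using Nat.strong_induction_on with
  | _ d IH =>
    intro a b ha hb hx
    by_cases hsmall : d ≤ (s / 2) * (q - 2)
    · exact Ideal.subset_span (binom_mem_Fgen ν q ha hb hsmall hx)
    push_neg at hsmall
    by_cases hcomm : ∃ i, 1 ≤ min (a i) (b i)
    · -- cancel a common variable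
      obtain ⟨i, hi⟩ := hcomm
      set m := min (a i) (b i) with hm
      have hma : m ≤ a i := min_le_left _ _
      have hmb : m ≤ b i := min_le_right _ _
      apply cancel_step ν _ (Finsupp.single_le_iff.mpr hma)
        (Finsupp.single_le_iff.mpr hmb)
      have hdpos : 0 < d := by
        have : 1 ≤ a i := le_trans hi hma
        have h2 : 1 ≤ ∑ k, a k :=
          le_trans this (Finset.single_le_sum (f := fun k => a k)
            (fun k _ => Nat.zero_le _) (Finset.mem_univ i))
        omega
      apply IH (d - m) (by omega)
      · rw [sum_sub_single hma, ha]
      · rw [sum_sub_single hmb, hb]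
      · exact fun x => chi_cancel ν (Finsupp.single_le_iff.mpr hma)
          (Finsupp.single_le_iff.mpr hmb) hx x
    · -- disjoint supports
      push_neg at hcomm
      have hdisj : ∀ i, a i = 0 ∨ b i = 0 := fun i => by have := hcomm i; omega
      have hdisj' : Disjoint a.support b.support := by
        rw [Finset.disjoint_left]
        intro i hia hib
        rw [Finsupp.mem_support_iff] at hia hib
        rcases hdisj i with h | h <;> tauto
      have hcards : a.support.card + b.support.card ≤ s := by
        classical
        have h1 := Finset.card_le_card (Finset.subset_univ (a.support ∪ b.support))
        rw [Finset.card_union_of_disjoint hdisj'] at h1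
        simpa using h1
      by_cases hca : a.support.card ≤ s / 2
      · exact core_step ν q hq hs hcard IH ha hb hx hdisj hsmall hca
      · have hcb : b.support.card ≤ s / 2 := by omega
        have := core_step ν q hq hs hcard IH hb ha (fun x => (hx x).symm)
          (fun i => (hdisj i).symm) hsmall hcb
        have hneg : monomial a (1:K) - monomial b 1
            = -(monomial b (1:K) - monomial a 1) := by ring
        rw [hneg]
        exact neg_mem this

lemma gen_mem_span (ν : Fin s → Fin n → ℕ) (q : ℕ) (hq : 2 < q) (hs : 4 ≤ s)
    (hcard : Fintype.card K = q) {f : MvPolynomial (Fin s) K}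
    (hhom : ∃ d, f.IsHomogeneous d)
    (hvan : ∀ x : Fin n → Kˣ, eval (ev K ν x) f = 0) :
    f ∈ Ideal.span (Fgen K ν q) := by
  classical
  obtain ⟨d, hd⟩ := hhom
  have hdeg : ∀ a ∈ f.support, (∑ i, a i) = d := by
    intro a hafs
    have h1 := hd (MvPolynomial.mem_support_iff.mp hafs)
    rw [← degree_eq, Finsupp.degree_eq_weight_one]
    exact h1
  set Ψ := f.support.image (chi K ν) with hΨ
  set C : ((Fin n → Kˣ) →* K) → K :=
    fun ψ => ∑ a ∈ f.support.filter (fun a => chi K ν a = ψ), coeff a f with hC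
  have hCzero : ∀ ψ ∈ Ψ, C ψ = 0 := by
    have hli := linearIndependent_monoidHom (Fin n → Kˣ) K
    rw [linearIndependent_iff'] at hli
    apply hli Ψ C
    funext x
    have h0 : (0 : (Fin n → Kˣ) → K) x = 0 := rfl
    rw [Finset.sum_apply, h0]
    have h1 : ∀ ψ ∈ Ψ, (C ψ • (⇑ψ : (Fin n → Kˣ) → K)) x
        = ∑ a ∈ f.support.filter (fun a => chi K ν a = ψ), coeff a f * chi K ν a x := by
      intro ψ hψ
      rw [Pi.smul_apply, smul_eq_mul, hC, Finset.sum_mul]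
      exact Finset.sum_congr rfl fun a haT => by
        rw [(Finset.mem_filter.mp haT).2]
    rw [Finset.sum_congr rfl h1,
      Finset.sum_fiberwise_of_maps_to (fun a ha => Finset.mem_image_of_mem _ ha)]
    have h2 := hvan x
    rw [eval_eq'] at h2
    rw [← h2]
    exact Finset.sum_congr rfl fun a _ => by rw [chi_apply]
  have hdecomp : f = ∑ ψ ∈ Ψ,
      ∑ a ∈ f.support.filter (fun a => chi K ν a = ψ), monomial a (coeff a f) := by
    conv_lhs => rw [f.as_sum]
    exact (Finset.sum_fiberwise_of_maps_to
      (fun a ha => Finset.mem_image_of_mem _ ha) _).symm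
  rw [hdecomp]
  apply Ideal.sum_mem
  intro ψ hψ
  obtain ⟨a₀, ha₀s, ha₀⟩ := Finset.mem_image.mp hψ
  have ha₀T : a₀ ∈ f.support.filter (fun a => chi K ν a = ψ) :=
    Finset.mem_filter.mpr ⟨ha₀s, ha₀⟩
  have hgroup : (∑ a ∈ f.support.filter (fun a => chi K ν a = ψ), monomial a (coeff a f))
      = ∑ a ∈ f.support.filter (fun a => chi K ν a = ψ),
          (coeff a f) • (monomial a (1:K) - monomial a₀ 1) := by
    have hstep : ∀ a, (coeff a f) • (monomial a (1:K) - monomial a₀ 1)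
        = monomial a (coeff a f) - monomial a₀ (coeff a f) := by
      intro a
      rw [smul_sub, MvPolynomial.smul_monomial, MvPolynomial.smul_monomial]
      simp
    have h0 : ∑ x ∈ f.support.filter (fun a => chi K ν a = ψ), coeff x f = 0 :=
      hCzero ψ hψ
    rw [Finset.sum_congr rfl fun a _ => hstep a, Finset.sum_sub_distrib,
      ← map_sum (monomial a₀), h0, map_zero, sub_zero]
  rw [hgroup]
  apply Ideal.sum_mem
  intro a haT
  rw [MvPolynomial.smul_eq_C_mul]
  apply Ideal.mul_mem_left
  obtain ⟨has, hachi⟩ := Finset.mem_filter.mp haT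
  exact binom_mem_span ν q hq hs hcard d a a₀ (hdeg a has) (hdeg a₀ ha₀s)
    (fun x => by rw [hachi, ha₀])

end ToricAux

open ToricAux in
/-- If `s ≥ 4` and `k = ⌊s/2⌋`, then `I(X)` is generated by a set of
polynomials each of total degree at most `k(q−2)`. -/
theorem generators_degree_bound
    (q n s : ℕ) (hq : 2 < q) (hs : 4 ≤ s) (K : Type) [Field K] [Fintype K]
    (hcard : Fintype.card K = q)
    (ν : Fin s → Fin n → ℕ) :
    ∃ F : Set (MvPolynomial (Fin s) K),
      (∀ f ∈ F, f.totalDegree ≤ (s / 2) * (q - 2)) ∧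
      toricVanishingIdeal K ν = Ideal.span F := by
  refine ⟨Fgen K ν q, fun f hf => hf.2, le_antisymm ?_ ?_⟩
  · rw [toricVanishingIdeal, Ideal.span_le]
    rintro f ⟨hhom, hvan⟩
    exact gen_mem_span ν q hq hs hcard hhom hvan
  · rw [Ideal.span_le]
    intro f hf
    exact Ideal.subset_span hf.1

end
end

section
/- Let G = C_{2k} be the even cycle (k ≥ 2, s = 2k) and let f = t^a − t^b ∈ I(X) be a nonzero binomial with a = (a_1,…,a_s), b = (b_1,…,b_s) ∈ ℕ^s such that |a| = |b|, supp(a) ∩ supp(b) = ∅, and a_i ≤ q−2 and b_j ≤ q−2 for all i, j. Then supp(a) ∪ supp(b) = {1,…,s}. -/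
open MvPolynomial

noncomputable section

/-- The vanishing ideal `I(X) ⊆ K[t_1,…,t_{2k}]` of the algebraic toric set
`X* = {(x_1x_2, x_2x_3, …, x_{2k}x_1) : x ∈ (Kˣ)^{2k}}` parameterized by the edges of the
even cycle `C_{2k}`. -/
def cycleVanishingIdeal (K : Type) [Field K] (k : ℕ) :
    Ideal (MvPolynomial (Fin (2 * k)) K) :=
  Ideal.span {f | (∃ d, f.IsHomogeneous d) ∧
    ∀ x : Fin (2 * k) → Kˣ,
      eval (fun i => ((x i * x (finRotate (2 * k) i) : Kˣ) : K)) f = 0}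

/-- Let `G = C_{2k}` (`k ≥ 2`) and let `f = t^a − t^b ∈ I(X)` be a nonzero
binomial with `|a| = |b|`, `supp(a) ∩ supp(b) = ∅` and all exponents `≤ q−2`.  Then
`supp(a) ∪ supp(b) = {1,…,2k}`. -/
theorem cycle_supports_cover
    (q k : ℕ) (hq : 2 < q) (hk : 2 ≤ k) (K : Type) [Field K] [Fintype K]
    (hcard : Fintype.card K = q)
    (a b : Fin (2 * k) →₀ ℕ)
    (hne : (monomial a 1 - monomial b 1 : MvPolynomial (Fin (2 * k)) K) ≠ 0)
    (hmem : (monomial a 1 - monomial b 1 : MvPolynomial (Fin (2 * k)) K) ∈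
      cycleVanishingIdeal K k)
    (hhom : (∑ i, a i) = ∑ i, b i)
    (hdisj : Disjoint a.support b.support)
    (ha : ∀ i, a i ≤ q - 2) (hb : ∀ i, b i ≤ q - 2) :
    a.support ∪ b.support = Finset.univ := by
  classical
  have hne0 : NeZero (2 * k) := ⟨by omega⟩
  set σ := finRotate (2 * k) with hσdef
  have hσ : ∀ x : Fin (2 * k), σ x = x + 1 := by
    obtain ⟨k', rfl⟩ : ∃ k', k = k' + 1 := ⟨k - 1, by omega⟩
    intro x
    exact finRotate_succ_apply x
  -- every element of the ideal vanishes at every point of X*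
  have hvan : ∀ x : Fin (2 * k) → Kˣ,
      eval (fun i => ((x i * x (σ i) : Kˣ) : K))
        (monomial a 1 - monomial b 1 : MvPolynomial (Fin (2 * k)) K) = 0 := by
    intro x
    have hle : cycleVanishingIdeal K k ≤
        RingHom.ker (eval (fun i => ((x i * x (σ i) : Kˣ) : K))) := by
      rw [cycleVanishingIdeal, Ideal.span_le]
      rintro f ⟨-, hf⟩
      exact hf x
    exact hle hmem
  obtain ⟨g, hg⟩ := IsCyclic.exists_generator (α := Kˣ)
  have horder : orderOf g = q - 1 := by
    rw [orderOf_eq_card_of_forall_mem_zpowers hg, Nat.card_eq_fintype_card, Fintype.card_units, hcard]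
  have hσne : ∀ z : Fin (2 * k), σ z ≠ z := by
    intro z h
    rw [hσ] at h
    have h1 : (1 : Fin (2 * k)) = 0 := by
      have h2 : z + 1 = z + 0 := by rw [add_zero]; exact h
      exact add_left_cancel h2
    rw [Fin.one_eq_zero_iff] at h1
    omega
  -- the congruence at each vertex
  have hmod : ∀ m : Fin (2 * k),
      (a (σ m) + a m) ≡ (b (σ m) + b m) [MOD q - 1] := by
    intro m
    set x : Fin (2 * k) → Kˣ := fun l => if l = σ m then g else 1 with hx
    have h0 := hvan x
    rw [map_sub, sub_eq_zero, eval_monomial, eval_monomial, one_mul, one_mul] at h0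
    have hprod : ∀ c : Fin (2 * k) →₀ ℕ,
        (c.prod fun n e => ((x n * x (σ n) : Kˣ) : K) ^ e) = (g : K) ^ (c (σ m) + c m) := by
      intro c
      rw [Finsupp.prod_fintype _ _ (fun i => pow_zero _)]
      have hterm : ∀ i : Fin (2 * k), ((x i * x (σ i) : Kˣ) : K) ^ c i
          = (if i = σ m then (g : K) ^ c i else 1) * (if i = m then (g : K) ^ c i else 1) := by
        intro i
        have hcond : (σ i = σ m) ↔ (i = m) := (finRotate (2 * k)).injective.eq_iff
        by_cases h1 : i = σ m <;> by_cases h2 : i = m <;>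
          simp [hx, h1, h2, hcond, hσne m, (hσne m).symm, mul_pow]
      rw [Finset.prod_congr rfl (fun i _ => hterm i), Finset.prod_mul_distrib,
        Finset.prod_ite_eq' Finset.univ (σ m) (fun i => (g : K) ^ c i),
        Finset.prod_ite_eq' Finset.univ m (fun i => (g : K) ^ c i)]
      simp [pow_add]
    rw [hprod a, hprod b] at h0
    have hU : g ^ (a (σ m) + a m) = g ^ (b (σ m) + b m) := by
      apply Units.ext
      rwa [Units.val_pow_eq_pow_val, Units.val_pow_eq_pow_val]
    rw [← horder]
    exact pow_eq_pow_iff_modEq.mp hU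
  -- propagation step
  have step : ∀ i : Fin (2 * k), a i = 0 → b i = 0 → a (σ i) = 0 ∧ b (σ i) = 0 := by
    intro i hai hbi
    have h := hmod i
    rw [hai, hbi, add_zero, add_zero] at h
    have ha' : a (σ i) < q - 1 := lt_of_le_of_lt (ha _) (by omega)
    have hb' : b (σ i) < q - 1 := lt_of_le_of_lt (hb _) (by omega)
    have heq : a (σ i) = b (σ i) := by
      have h' : a (σ i) % (q - 1) = b (σ i) % (q - 1) := h
      rwa [Nat.mod_eq_of_lt ha', Nat.mod_eq_of_lt hb'] at h'
    by_cases h0 : a (σ i) = 0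
    · exact ⟨h0, heq ▸ h0⟩
    · exfalso
      have h1 : σ i ∈ a.support := Finsupp.mem_support_iff.mpr h0
      have h2 : σ i ∈ b.support := Finsupp.mem_support_iff.mpr (by rw [← heq]; exact h0)
      exact (Finset.disjoint_left.mp hdisj h1) h2
  by_contra hcon
  obtain ⟨i, hi⟩ : ∃ i, i ∉ a.support ∪ b.support := by
    by_contra h'
    push_neg at h'
    exact hcon (Finset.eq_univ_iff_forall.mpr h')
  rw [Finset.mem_union, not_or, Finsupp.mem_support_iff, Finsupp.mem_support_iff,
    not_ne_iff, not_ne_iff] at hi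
  obtain ⟨hai, hbi⟩ := hi
  open Fin.NatCast in
  have hall : ∀ n : ℕ, a (i + (n : Fin (2 * k))) = 0 ∧ b (i + (n : Fin (2 * k))) = 0 := by
    intro n
    induction n with
    | zero => simpa using ⟨hai, hbi⟩
    | succ n ih =>
      have hstep := step _ ih.1 ih.2
      rw [hσ] at hstep
      open Fin.NatCast in
      have hcast : ((n + 1 : ℕ) : Fin (2 * k)) = (n : Fin (2 * k)) + 1 := by push_cast; ring
      rw [hcast, ← add_assoc]
      exact hstep
  have hzero : ∀ j : Fin (2 * k), a j = 0 ∧ b j = 0 := by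
    intro j
    open Fin.NatCast in
    have hj := hall ((j - i).val)
    rwa [Fin.cast_val_eq_self, add_comm, sub_add_cancel] at hj
  have hab : a = b := Finsupp.ext fun j => by rw [(hzero j).1, (hzero j).2]
  exact hne (by rw [hab, sub_self])
end
end

section
/- Let G = C_{2k} be the even cycle (k ≥ 2, s = 2k). Let σ = A ⊔ B be a partition of {1,…,s} with 1 ∈ A, let r ∈ {1,…,q−2}, and suppose there exists i ∈ A with i > 2 and i−1 ∉ A. Let σ' = A' ⊔ B' be the partition with A' = (A∖{i}) ∪ {i−1} and B' = (B∖{i−1}) ∪ {i}. Then f_σ^r ∈ I(X) if and only if f_{σ'}^r ∈ I(X). -/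
open MvPolynomial

noncomputable section

/-- The recursive labelling function `ρ_σ^r` (with indices `0,…,s−1`, so that the paper's
index `i ∈ {1,…,s}` corresponds to `i−1` here).  The partition `σ = A ⊔ B` of
`{0,…,s−1}` is recorded by the finset `A`, `B` being its complement;
`ρ(0) = r` and `ρ(i+1) = q−1−ρ(i)` if `i` and `i+1` lie in the same part of `σ`,
`ρ(i+1) = ρ(i)` otherwise. -/
def rho (q : ℕ) (A : Finset ℕ) (r : ℕ) : ℕ → ℕ
  | 0 => r
  | i + 1 => if (i ∈ A ↔ i + 1 ∈ A) then q - 1 - rho q A r i else rho q A r i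

/-- The binomial `f_σ^r = t^a − t^b` associated to a partition `σ = A ⊔ B` of
`{0,…,2k−1}` (with `0 ∈ A`) and `r ∈ {1,…,q−2}`: `supp(a) = A`, `supp(b) = B`, and the
exponent of `t_i` is `ρ_σ^r(i)`. -/
def fsr (K : Type) [Field K] (q k : ℕ) (A : Finset ℕ) (r : ℕ) :
    MvPolynomial (Fin (2 * k)) K :=
  monomial (Finsupp.equivFunOnFinite.symm fun i : Fin (2 * k) =>
      if (i : ℕ) ∈ A then rho q A r i else 0) 1 -
  monomial (Finsupp.equivFunOnFinite.symm fun i : Fin (2 * k) =>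
      if (i : ℕ) ∈ A then 0 else rho q A r i) 1

set_option linter.unusedSectionVars false
set_option linter.unusedVariables false

lemma rho_mem {q r : ℕ} (hq : 2 < q) (hr1 : 1 ≤ r) (hr2 : r ≤ q - 2) (A : Finset ℕ) :
    ∀ i, rho q A r i = r ∨ rho q A r i = q - 1 - r := by
  intro i
  induction i with
  | zero => left; rfl
  | succ i ih =>
    rw [rho]
    split
    · rcases ih with h | h <;> rw [h]
      · right; rfl
      · left; omega
    · exact ih

lemma rho_le {q r : ℕ} (hq : 2 < q) (hr1 : 1 ≤ r) (hr2 : r ≤ q - 2) (A : Finset ℕ) (i : ℕ) :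
    1 ≤ rho q A r i ∧ rho q A r i ≤ q - 2 := by
  rcases rho_mem hq hr1 hr2 A i with h | h <;> omega

lemma rho_swap {q r : ℕ} (hq : 2 < q) (hr1 : 1 ≤ r) (hr2 : r ≤ q - 2)
    (A : Finset ℕ) (j : ℕ) (hj2 : 2 ≤ j) (hjA : j ∈ A) (hj1A : j - 1 ∉ A) :
    ∀ i, rho q (insert (j - 1) (A.erase j)) r i =
      if i = j - 1 ∨ i = j then q - 1 - rho q A r i else rho q A r i := by
  set A' := insert (j - 1) (A.erase j) with hA'
  have hmem : ∀ n : ℕ, (n ∈ A') ↔ (n = j - 1 ∨ (n ≠ j ∧ n ∈ A)) := by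
    intro n; simp [hA', Finset.mem_insert, Finset.mem_erase, and_comm]
  have hsame : ∀ n : ℕ, n ≠ j - 1 → n ≠ j → (n ∈ A' ↔ n ∈ A) := by
    intro n h1 h2; rw [hmem]; constructor
    · rintro (h | h); · omega
      · exact h.2
    · intro h; exact Or.inr ⟨h2, h⟩
  intro i
  induction i with
  | zero =>
    have : ¬ ((0:ℕ) = j - 1 ∨ (0:ℕ) = j) := by omega
    rw [if_neg this]; rfl
  | succ i ih =>
    have hle := fun n => (rho_le hq hr1 hr2 A n).2
    rcases lt_trichotomy (i+1) (j-1) with h | h | h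
    · -- i+1 < j-1
      have hi : ¬ (i = j - 1 ∨ i = j) := by omega
      have hi1 : ¬ (i + 1 = j - 1 ∨ i + 1 = j) := by omega
      rw [if_neg hi1, rho, rho, ih, if_neg hi]
      have c : (i ∈ A' ↔ i + 1 ∈ A') ↔ (i ∈ A ↔ i + 1 ∈ A) := by
        rw [hsame i (by omega) (by omega), hsame (i+1) (by omega) (by omega)]
      rw [if_congr c rfl rfl]
    · -- i+1 = j-1, i = j-2
      have hi : ¬ (i = j - 1 ∨ i = j) := by omega
      have m1' : i + 1 ∈ A' := (hmem _).2 (Or.inl h)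
      have m1 : i + 1 ∉ A := by rw [h]; exact hj1A
      have ms : i ∈ A' ↔ i ∈ A := hsame i (by omega) (by omega)
      rw [if_pos (Or.inl h), rho, rho, ih, if_neg hi]
      by_cases hiA : i ∈ A
      · rw [if_pos (iff_of_true (ms.2 hiA) m1'), if_neg (fun hh => m1 (hh.1 hiA))]
      · rw [if_neg (fun hh => hiA (ms.1 (hh.2 m1'))),
          if_pos (iff_of_false hiA m1)]
        have := hle i; omega
    · rcases lt_trichotomy (i+1) j with h2 | h2 | h2
      · omega
      · -- i+1 = j, i = j-1
        have hieq : i = j - 1 := by omega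
        have mi' : i ∈ A' := (hmem _).2 (Or.inl hieq)
        have mi : i ∉ A := hieq ▸ hj1A
        have m1 : i + 1 ∈ A := h2 ▸ hjA
        have m1' : i + 1 ∉ A' := by
          rw [hmem]; rintro (hh | hh) <;> omega
        rw [if_pos (Or.inr h2), rho, rho, ih, if_pos (Or.inl hieq),
          if_neg (fun hh => m1' (hh.1 mi')), if_neg (fun hh => mi (hh.2 m1))]
      · rcases lt_trichotomy (i+1) (j+1) with h3 | h3 | h3
        · omega
        · -- i+1 = j+1, i = j
          have hieq : i = j := by omega
          have mi : i ∈ A := hieq ▸ hjA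
          have mi' : i ∉ A' := by
            rw [hmem]; rintro (hh | hh) <;> omega
          have ms1 : i + 1 ∈ A' ↔ i + 1 ∈ A := hsame (i+1) (by omega) (by omega)
          have hi1 : ¬ (i + 1 = j - 1 ∨ i + 1 = j) := by omega
          rw [if_neg hi1, rho, rho, ih, if_pos (Or.inr hieq)]
          by_cases hA1 : i + 1 ∈ A
          · rw [if_neg (fun hh => mi' (hh.2 (ms1.2 hA1))), if_pos (iff_of_true mi hA1)]
          · rw [if_pos (iff_of_false mi' (fun hh => hA1 (ms1.1 hh))),
              if_neg (fun hh => hA1 (hh.1 mi))]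
            have := hle i; omega
        · -- i ≥ j+1
          have hi : ¬ (i = j - 1 ∨ i = j) := by omega
          have hi1 : ¬ (i + 1 = j - 1 ∨ i + 1 = j) := by omega
          rw [if_neg hi1, rho, rho, ih, if_neg hi]
          have c : (i ∈ A' ↔ i + 1 ∈ A') ↔ (i ∈ A ↔ i + 1 ∈ A) := by
            rw [hsame i (by omega) (by omega), hsame (i+1) (by omega) (by omega)]
          rw [if_congr c rfl rfl]

lemma rho_prev {q r : ℕ} (A : Finset ℕ) (j : ℕ) (hj2 : 1 ≤ j) (hjA : j ∈ A) (hj1A : j - 1 ∉ A) :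
    rho q A r (j - 1) = rho q A r j := by
  conv_rhs => rw [show j = (j-1) + 1 by omega, rho]
  rw [if_neg (by rw [show j - 1 + 1 = j by omega]; tauto)]

variable {K : Type} [Field K] [Fintype K] {k : ℕ}

lemma eval_mono (x : Fin (2*k) → Kˣ) (a : Fin (2*k) → ℕ) :
    eval (fun i => ((x i * x (finRotate (2 * k) i) : Kˣ) : K))
      (monomial (Finsupp.equivFunOnFinite.symm a) (1:K))
      = ((∏ i, (x i * x (finRotate (2*k) i)) ^ a i : Kˣ) : K) := by
  rw [eval_monomial, one_mul, Finsupp.prod_fintype _ _ (fun i => pow_zero _)]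
  push_cast
  simp

lemma vanish_of_mem {f : MvPolynomial (Fin (2*k)) K} (hf : f ∈ cycleVanishingIdeal K k)
    (x : Fin (2*k) → Kˣ) :
    eval (fun i => ((x i * x (finRotate (2 * k) i) : Kˣ) : K)) f = 0 := by
  have hle : cycleVanishingIdeal K k ≤
      RingHom.ker (eval (fun i => ((x i * x (finRotate (2 * k) i) : Kˣ) : K))) := by
    rw [cycleVanishingIdeal, Ideal.span_le]
    intro g hg
    exact hg.2 x
  exact hle hf

attribute [local instance] MvPolynomial.gradedAlgebra

lemma ideal_isHomogeneous :
    (cycleVanishingIdeal K k).IsHomogeneous (homogeneousSubmodule (Fin (2*k)) K) :=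
  Ideal.homogeneous_span _ _ (fun f hf => by
    obtain ⟨⟨d, hd⟩, _⟩ := hf
    exact ⟨d, (mem_homogeneousSubmodule _ _).2 hd⟩)

lemma binomial_mem_iff (a b : Fin (2*k) → ℕ) :
    (monomial (Finsupp.equivFunOnFinite.symm a) (1:K) -
      monomial (Finsupp.equivFunOnFinite.symm b) 1) ∈ cycleVanishingIdeal K k
    ↔ ((∑ i, a i) = (∑ i, b i) ∧ ∀ x : Fin (2*k) → Kˣ,
        (∏ i, (x i * x (finRotate (2*k) i)) ^ a i) =
          ∏ i, (x i * x (finRotate (2*k) i)) ^ b i) := by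
  have hdega : (Finsupp.equivFunOnFinite.symm a).degree = ∑ i, a i := by
    rw [Finsupp.degree_eq_weight_one]
    rw [Finsupp.weight_apply, Finsupp.sum_fintype _ _ (fun i => by simp)]
    simp [Finsupp.equivFunOnFinite]
    rfl
  have hdegb : (Finsupp.equivFunOnFinite.symm b).degree = ∑ i, b i := by
    rw [Finsupp.degree_eq_weight_one]
    rw [Finsupp.weight_apply, Finsupp.sum_fintype _ _ (fun i => by simp)]
    simp [Finsupp.equivFunOnFinite]
    rfl
  constructor
  · intro hmem
    have hvan : ∀ x : Fin (2*k) → Kˣ,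
        (∏ i, (x i * x (finRotate (2*k) i)) ^ a i) =
          ∏ i, (x i * x (finRotate (2*k) i)) ^ b i := by
      intro x
      have := vanish_of_mem hmem x
      rw [map_sub, eval_mono, eval_mono, sub_eq_zero] at this
      exact_mod_cast Units.ext this
    refine ⟨?_, hvan⟩
    by_contra hne
    -- extract homogeneous component of degree ∑ a i
    have hma : monomial (Finsupp.equivFunOnFinite.symm a) (1:K) ∈
        homogeneousSubmodule (Fin (2*k)) K (∑ i, a i) :=
      (mem_homogeneousSubmodule _ _).2 (isHomogeneous_monomial _ hdega)
    have hmb : monomial (Finsupp.equivFunOnFinite.symm b) (1:K) ∈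
        homogeneousSubmodule (Fin (2*k)) K (∑ i, b i) :=
      (mem_homogeneousSubmodule _ _).2 (isHomogeneous_monomial _ hdegb)
    letI := MvPolynomial.gradedAlgebra (σ := Fin (2*k)) (R := K)
    have hcomp := ideal_isHomogeneous (∑ i, a i) hmem
    rw [DirectSum.decompose_sub] at hcomp
    have e1 := DirectSum.decompose_of_mem_same (homogeneousSubmodule (Fin (2*k)) K) hma
    have e2 := DirectSum.decompose_of_mem_ne (homogeneousSubmodule (Fin (2*k)) K) hmb
      (Ne.symm hne)
    rw [DirectSum.sub_apply, AddSubgroupClass.coe_sub, e1, e2, sub_zero] at hcomp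
    have := vanish_of_mem hcomp (fun _ => 1)
    rw [eval_mono] at this
    simp at this
  · rintro ⟨hdeg, hvan⟩
    apply Ideal.subset_span
    constructor
    · exact ⟨∑ i, a i, ((isHomogeneous_monomial _ hdega).sub
        (isHomogeneous_monomial _ (by rw [hdegb, hdeg])))⟩
    · intro x
      rw [map_sub, eval_mono, eval_mono, sub_eq_zero]
      exact congrArg Units.val (hvan x)

section helpers
variable {G : Type} [CommGroup G]

lemma prod_shift {n : ℕ} (Y : Fin n → G) (a a' : Fin n → ℕ) (p p' : Fin n) (c c' : ℕ)
    (h : ∀ i, a' i + (if i = p then c else 0) = a i + (if i = p' then c' else 0)) :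
    (∏ i, Y i ^ a' i) * Y p ^ c = (∏ i, Y i ^ a i) * Y p' ^ c' := by
  have hd : ∀ (d : ℕ) (s : Fin n),
      (∏ i, Y i ^ (if i = s then d else 0)) = Y s ^ d := by
    intro d s
    rw [show (∏ i, Y i ^ (if i = s then d else 0)) =
        ∏ i, (if i = s then Y i ^ d else 1) from
      Finset.prod_congr rfl (fun i _ => by split <;> simp),
      Finset.prod_ite_eq' Finset.univ s (fun i => Y i ^ d)]
    simp
  have := Finset.prod_congr rfl (fun i (_ : i ∈ Finset.univ) => congrArg (Y i ^ ·) (h i))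
  simp only [pow_add] at this
  rw [Finset.prod_mul_distrib, Finset.prod_mul_distrib, hd, hd] at this
  exact this

lemma sum_shift {n : ℕ} (a a' : Fin n → ℕ) (p p' : Fin n) (c c' : ℕ)
    (h : ∀ i, a' i + (if i = p then c else 0) = a i + (if i = p' then c' else 0)) :
    (∑ i, a' i) + c = (∑ i, a i) + c' := by
  have hd : ∀ (d : ℕ) (s : Fin n), (∑ i, if i = s then d else 0) = d := by
    intro d s
    rw [Finset.sum_ite_eq' Finset.univ s (fun _ => d)]; simp
  have := Finset.sum_congr rfl (fun i (_ : i ∈ Finset.univ) => h i)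
  rw [Finset.sum_add_distrib, Finset.sum_add_distrib, hd, hd] at this
  exact this
end helpers

/-- Let `G = C_{2k}` (`k ≥ 2`, `s = 2k`).  Let `σ = A ⊔ B` be a partition of
the index set with `0 ∈ A` (paper: `1 ∈ A`), `r ∈ {1,…,q−2}`, and suppose `j ∈ A` with
`j ≥ 2` (paper: `i > 2`) and `j − 1 ∉ A`.  Let `σ' = A' ⊔ B'` with
`A' = (A∖{j}) ∪ {j−1}` and `B' = (B∖{j−1}) ∪ {j}`.  Then `f_σ^r ∈ I(X)` iff
`f_{σ'}^r ∈ I(X)`. -/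
theorem exchange_lemma
    (q k : ℕ) (hq : 2 < q) (hk : 2 ≤ k) (K : Type) [Field K] [Fintype K]
    (hcard : Fintype.card K = q)
    (A : Finset ℕ) (hA : A ⊆ Finset.range (2 * k)) (h0 : 0 ∈ A)
    (r : ℕ) (hr1 : 1 ≤ r) (hr2 : r ≤ q - 2)
    (j : ℕ) (hj2 : 2 ≤ j) (hjs : j < 2 * k) (hjA : j ∈ A) (hj1A : j - 1 ∉ A) :
    fsr K q k A r ∈ cycleVanishingIdeal K k ↔
      fsr K q k (insert (j - 1) (A.erase j)) r ∈ cycleVanishingIdeal K k := by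
  have hj1s : j - 1 < 2 * k := by omega
  set A' := insert (j - 1) (A.erase j) with hA'def
  have hmem : ∀ n : ℕ, (n ∈ A') ↔ (n = j - 1 ∨ (n ≠ j ∧ n ∈ A)) := by
    intro n; simp [hA'def, Finset.mem_insert, Finset.mem_erase, and_comm]
  have hmle : 1 ≤ rho q A r j ∧ rho q A r j ≤ q - 2 := rho_le hq hr1 hr2 A j
  have hmj1 : rho q A r (j - 1) = rho q A r j := rho_prev A j (by omega) hjA hj1A
  have hswap := rho_swap hq hr1 hr2 A j hj2 hjA hj1A
  have hj01 : (⟨j - 1, hj1s⟩ : Fin (2 * k)) ≠ ⟨j, hjs⟩ := by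
    simp only [Ne, Fin.mk.injEq]; omega
  have hjmem' : j ∉ A' := by
    rw [hmem]; rintro (h | ⟨h, _⟩); · omega
    · exact h rfl
  have hj1mem' : j - 1 ∈ A' := (hmem _).2 (Or.inl rfl)
  have key_a : ∀ i : Fin (2 * k),
      (if (i : ℕ) ∈ A' then rho q A' r i else 0) +
        (if i = ⟨j, hjs⟩ then rho q A r j else 0) =
      (if (i : ℕ) ∈ A then rho q A r i else 0) +
        (if i = ⟨j - 1, hj1s⟩ then q - 1 - rho q A r j else 0) := by
    intro i
    by_cases hi0 : i = ⟨j, hjs⟩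
    · subst hi0
      rw [if_neg (show ¬ (j ∈ A') from hjmem'), if_pos (show j ∈ A from hjA),
        if_pos rfl, if_neg (Ne.symm hj01),
        show ((⟨j, hjs⟩ : Fin (2 * k)) : ℕ) = j from rfl]
      omega
    · by_cases hi1 : i = ⟨j - 1, hj1s⟩
      · subst hi1
        rw [if_pos (show j - 1 ∈ A' from hj1mem'), if_neg (show ¬ (j - 1 ∈ A) from hj1A),
          if_neg hi0, if_pos rfl,
          show rho q A' r (j - 1) = if j - 1 = j - 1 ∨ j - 1 = j then q - 1 - rho q A r (j-1)
            else rho q A r (j-1) from hswap (j-1),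
          if_pos (Or.inl rfl), hmj1]
        omega
      · have hne1 : (i : ℕ) ≠ j - 1 := fun h => hi1 (Fin.ext h)
        have hne0 : (i : ℕ) ≠ j := fun h => hi0 (Fin.ext h)
        have h1 : (i : ℕ) ∈ A' ↔ (i : ℕ) ∈ A := by
          rw [hmem]; constructor
          · rintro (h | h); · omega
            · exact h.2
          · intro h; exact Or.inr ⟨hne0, h⟩
        have h2 : rho q A' r (i : ℕ) = rho q A r (i : ℕ) := by
          rw [hswap, if_neg (by tauto)]
        rw [if_neg hi0, if_neg hi1, h2]
        by_cases hiA : (i : ℕ) ∈ A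
        · rw [if_pos (h1.2 hiA), if_pos hiA]
        · rw [if_neg (fun h => hiA (h1.1 h)), if_neg hiA]
  have key_b : ∀ i : Fin (2 * k),
      (if (i : ℕ) ∈ A' then 0 else rho q A' r i) +
        (if i = ⟨j - 1, hj1s⟩ then rho q A r j else 0) =
      (if (i : ℕ) ∈ A then 0 else rho q A r i) +
        (if i = ⟨j, hjs⟩ then q - 1 - rho q A r j else 0) := by
    intro i
    by_cases hi0 : i = ⟨j, hjs⟩
    · subst hi0
      rw [if_neg (show ¬ (j ∈ A') from hjmem'), if_pos (show j ∈ A from hjA),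
        if_neg (Ne.symm hj01), if_pos rfl,
        show rho q A' r j = if j = j - 1 ∨ j = j then q - 1 - rho q A r j
          else rho q A r j from hswap j,
        if_pos (Or.inr rfl)]
      omega
    · by_cases hi1 : i = ⟨j - 1, hj1s⟩
      · subst hi1
        rw [if_pos (show j - 1 ∈ A' from hj1mem'), if_neg (show ¬ (j - 1 ∈ A) from hj1A),
          if_pos rfl, if_neg hi0, hmj1]
        omega
      · have hne1 : (i : ℕ) ≠ j - 1 := fun h => hi1 (Fin.ext h)
        have hne0 : (i : ℕ) ≠ j := fun h => hi0 (Fin.ext h)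
        have h1 : (i : ℕ) ∈ A' ↔ (i : ℕ) ∈ A := by
          rw [hmem]; constructor
          · rintro (h | h); · omega
            · exact h.2
          · intro h; exact Or.inr ⟨hne0, h⟩
        have h2 : rho q A' r (i : ℕ) = rho q A r (i : ℕ) := by
          rw [hswap, if_neg (by tauto)]
        rw [if_neg hi0, if_neg hi1, h2]
        by_cases hiA : (i : ℕ) ∈ A
        · rw [if_pos (h1.2 hiA), if_pos hiA]
        · rw [if_neg (fun h => hiA (h1.1 h)), if_neg hiA]
  rw [fsr, fsr, binomial_mem_iff, binomial_mem_iff]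
  have hsa := sum_shift _ _ _ _ _ _ key_a
  have hsb := sum_shift _ _ _ _ _ _ key_b
  have hpow1 : ∀ u : Kˣ, u ^ (q - 1) = 1 := by
    intro u
    have h1 : Nat.card Kˣ = q - 1 := by
      rw [Nat.card_units, Nat.card_eq_fintype_card, hcard]
    rw [← h1]
    exact pow_card_eq_one'
  have hvan_iff : ∀ x : Fin (2 * k) → Kˣ,
      ((∏ i, (x i * x (finRotate (2*k) i)) ^ (if (i : ℕ) ∈ A then rho q A r i else 0)) =
        ∏ i, (x i * x (finRotate (2*k) i)) ^ (if (i : ℕ) ∈ A then 0 else rho q A r i)) ↔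
      ((∏ i, (x i * x (finRotate (2*k) i)) ^ (if (i : ℕ) ∈ A' then rho q A' r i else 0)) =
        ∏ i, (x i * x (finRotate (2*k) i)) ^ (if (i : ℕ) ∈ A' then 0 else rho q A' r i)) := by
    intro x
    set Y : Fin (2 * k) → Kˣ := fun i => x i * x (finRotate (2 * k) i) with hY
    have hpa := prod_shift Y _ _ _ _ _ _ key_a
    have hpb := prod_shift Y _ _ _ _ _ _ key_b
    set P' := ∏ i, Y i ^ (if (i : ℕ) ∈ A' then rho q A' r i else 0)
    set Q' := ∏ i, Y i ^ (if (i : ℕ) ∈ A' then 0 else rho q A' r i)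
    set P := ∏ i, Y i ^ (if (i : ℕ) ∈ A then rho q A r i else 0)
    set Q := ∏ i, Y i ^ (if (i : ℕ) ∈ A then 0 else rho q A r i)
    have e1 : P' * (Y ⟨j, hjs⟩ ^ rho q A r j * Y ⟨j - 1, hj1s⟩ ^ rho q A r j) = P := by
      rw [← mul_assoc, hpa, mul_assoc, ← pow_add,
        show q - 1 - rho q A r j + rho q A r j = q - 1 by omega, hpow1, mul_one]
    have e2 : Q' * (Y ⟨j, hjs⟩ ^ rho q A r j * Y ⟨j - 1, hj1s⟩ ^ rho q A r j) = Q := by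
      rw [mul_comm (Y ⟨j, hjs⟩ ^ rho q A r j), ← mul_assoc, hpb, mul_assoc, ← pow_add,
        show q - 1 - rho q A r j + rho q A r j = q - 1 by omega, hpow1, mul_one]
    constructor
    · intro h
      have : P' * (Y ⟨j, hjs⟩ ^ rho q A r j * Y ⟨j - 1, hj1s⟩ ^ rho q A r j) =
          Q' * (Y ⟨j, hjs⟩ ^ rho q A r j * Y ⟨j - 1, hj1s⟩ ^ rho q A r j) := by
        rw [e1, e2]; exact h
      exact mul_right_cancel this
    · intro h
      rw [← e1, ← e2, h]
  constructor
  · rintro ⟨hdeg, hvan⟩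
    exact ⟨by omega, fun x => (hvan_iff x).1 (hvan x)⟩
  · rintro ⟨hdeg, hvan⟩
    exact ⟨by omega, fun x => (hvan_iff x).2 (hvan x)⟩
end
end

section
/- Let G = C_{2k} be the even cycle (k ≥ 2, s = 2k). Let σ = A ⊔ B be a partition of {1,…,s} with 1 ∈ A and let r ∈ {1,…,q−2}. If f_σ^r ∈ I(X), then |A| = |B|. -/
open MvPolynomial

noncomputable section

theorem aeval_X_homog (K : Type) [Field K] (n d : ℕ) (g : MvPolynomial (Fin n) K)
    (hg : g.IsHomogeneous d) :
    aeval (fun _ : Fin n => (Polynomial.X : Polynomial K)) g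
      = Polynomial.C (eval (fun _ => (1:K)) g) * Polynomial.X ^ d := by
  have lhs : aeval (fun _ : Fin n => (Polynomial.X : Polynomial K)) g
      = ∑ m ∈ g.support, Polynomial.C (coeff m g) * Polynomial.X ^ d := by
    conv_lhs => rw [g.as_sum]
    rw [map_sum]
    refine Finset.sum_congr rfl fun m hm => ?_
    rw [aeval_monomial]
    have hdeg : ∑ i, m i = d := by
      have := hg (mem_support_iff.mp hm)
      simpa [Finsupp.weight_apply, Finsupp.sum_fintype] using this
    simp [Finset.prod_pow_eq_pow_sum, hdeg, algebraMap_eq]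
  have rhs : eval (fun _ => (1:K)) g = ∑ m ∈ g.support, coeff m g := by
    conv_lhs => rw [g.as_sum]
    rw [map_sum]
    exact Finset.sum_congr rfl fun m hm => by simp [eval_monomial, Finsupp.prod]
  rw [lhs, rhs, map_sum, Finset.sum_mul]

theorem ideal_le_ker' (K : Type) [Field K] (k : ℕ) :
    cycleVanishingIdeal K k ≤
      RingHom.ker ((aeval (fun _ : Fin (2*k) => (Polynomial.X : Polynomial K))).toRingHom) := by
  rw [cycleVanishingIdeal, Ideal.span_le]
  rintro g ⟨⟨d, hd⟩, hv⟩
  have h1 : eval (fun _ => (1:K)) g = 0 := by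
    have := hv (fun _ => 1)
    simpa using this
  simp only [SetLike.mem_coe, RingHom.mem_ker, AlgHom.toRingHom_eq_coe, RingHom.coe_coe]
  rw [aeval_X_homog K _ d g hd, h1]
  simp

theorem rho_parity (q : ℕ) (A : Finset ℕ) (r : ℕ) (hr : r ≤ q - 1) (h0 : 0 ∈ A) :
    ∀ i, rho q A r i = if (i ∈ A ↔ i % 2 = 0) then r else q - 1 - r := by
  intro i
  induction i with
  | zero => simp [rho, h0]
  | succ i ih =>
    have hp1 : ((i+1) % 2 = 0) ↔ ¬ (i % 2 = 0) := by omega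
    rw [rho, ih]
    by_cases hi : i ∈ A <;> by_cases hi1 : (i+1) ∈ A <;> by_cases hp : i % 2 = 0 <;>
      simp [hi, hi1, hp, hp1] <;> omega

theorem card_even_range (k : ℕ) :
    ((Finset.range (2*k)).filter (fun i => i % 2 = 0)).card = k := by
  induction k with
  | zero => simp
  | succ k ih =>
    have h2k : 2 * (k+1) = (2*k + 1) + 1 := by ring
    rw [h2k, Finset.range_add_one, Finset.range_add_one, Finset.filter_insert, Finset.filter_insert]
    have h1 : ¬ ((2*k+1) % 2 = 0) := by omega
    have h2 : (2*k) % 2 = 0 := by omega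
    rw [if_neg h1, if_pos h2, Finset.card_insert_of_notMem (by simp), ih]


/-- Let `G = C_{2k}` (`k ≥ 2`, `s = 2k`), `σ = A ⊔ B` a partition of the
index set with `0 ∈ A` (paper: `1 ∈ A`) and `r ∈ {1,…,q−2}`.  If `f_σ^r ∈ I(X)` then
`|A| = |B|`. -/
theorem homogeneity_condition
    (q k : ℕ) (hq : 2 < q) (hk : 2 ≤ k) (K : Type) [Field K] [Fintype K]
    (hcard : Fintype.card K = q)
    (A : Finset ℕ) (hA : A ⊆ Finset.range (2 * k)) (h0 : 0 ∈ A)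
    (r : ℕ) (hr1 : 1 ≤ r) (hr2 : r ≤ q - 2)
    (hmem : fsr K q k A r ∈ cycleVanishingIdeal K k) :
    A.card = (Finset.range (2 * k) \ A).card := by
  classical
  set r' := q - 1 - r with hr'
  have hrr' : r + r' = q - 1 := by omega
  -- step 1: aeval at X kills fsr
  have hker := ideal_le_ker' K k hmem
  rw [RingHom.mem_ker] at hker
  have hXab : (Polynomial.X : Polynomial K) ^
        (∑ i : Fin (2*k), if (i : ℕ) ∈ A then rho q A r i else 0)
      = Polynomial.X ^ (∑ i : Fin (2*k), if (i : ℕ) ∈ A then 0 else rho q A r i) := by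
    have h1 : ∀ f : Fin (2*k) → ℕ,
        (aeval (fun _ : Fin (2*k) => (Polynomial.X : Polynomial K)))
          (monomial (Finsupp.equivFunOnFinite.symm f) (1:K)) = Polynomial.X ^ (∑ i, f i) := by
      intro f
      rw [aeval_monomial]
      simp [Finset.prod_pow_eq_pow_sum]
    simp only [AlgHom.toRingHom_eq_coe, RingHom.coe_coe, fsr, map_sub, h1] at hker
    exact sub_eq_zero.mp hker
  have hdad : (∑ i : Fin (2*k), if (i : ℕ) ∈ A then rho q A r i else 0)
      = (∑ i : Fin (2*k), if (i : ℕ) ∈ A then 0 else rho q A r i) := by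
    have := congrArg Polynomial.natDegree hXab
    simpa using this
  -- step 2: rewrite sums over range
  rw [Fin.sum_univ_eq_sum_range (fun j => if j ∈ A then rho q A r j else 0) (2*k),
      Fin.sum_univ_eq_sum_range (fun j => if j ∈ A then 0 else rho q A r j) (2*k)] at hdad
  have hrho := rho_parity q A r (by omega) h0
  set n00 := ((Finset.range (2*k)).filter (fun j => j ∈ A ∧ j % 2 = 0)).card with hn00
  set n01 := ((Finset.range (2*k)).filter (fun j => j ∈ A ∧ ¬ (j % 2 = 0))).card with hn01
  set n10 := ((Finset.range (2*k)).filter (fun j => ¬ (j ∈ A) ∧ j % 2 = 0)).card with hn10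
  set n11 := ((Finset.range (2*k)).filter (fun j => ¬ (j ∈ A) ∧ ¬ (j % 2 = 0))).card with hn11
  have hda : (∑ j ∈ Finset.range (2*k), if j ∈ A then rho q A r j else 0)
      = n00 * r + n01 * r' := by
    have hpt : ∀ j ∈ Finset.range (2*k), (if j ∈ A then rho q A r j else 0)
        = (if j ∈ A ∧ j % 2 = 0 then r else 0) + (if j ∈ A ∧ ¬ (j % 2 = 0) then r' else 0) := by
      intro j _
      by_cases h1 : j ∈ A <;> by_cases h2 : j % 2 = 0 <;> simp [h1, h2, hrho j, hr']
    rw [Finset.sum_congr rfl hpt, Finset.sum_add_distrib, ← Finset.sum_filter,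
      ← Finset.sum_filter, Finset.sum_const, Finset.sum_const, smul_eq_mul, smul_eq_mul]
  have hdb : (∑ j ∈ Finset.range (2*k), if j ∈ A then 0 else rho q A r j)
      = n10 * r' + n11 * r := by
    have hpt : ∀ j ∈ Finset.range (2*k), (if j ∈ A then 0 else rho q A r j)
        = (if ¬ (j ∈ A) ∧ j % 2 = 0 then r' else 0)
          + (if ¬ (j ∈ A) ∧ ¬ (j % 2 = 0) then r else 0) := by
      intro j _
      by_cases h1 : j ∈ A <;> by_cases h2 : j % 2 = 0 <;> simp [h1, h2, hrho j, hr']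
    rw [Finset.sum_congr rfl hpt, Finset.sum_add_distrib, ← Finset.sum_filter,
      ← Finset.sum_filter, Finset.sum_const, Finset.sum_const, smul_eq_mul, smul_eq_mul]
  rw [hda, hdb] at hdad
  -- card identities
  have hcA : n00 + n01 = A.card := by
    rw [hn00, hn01, Finset.card_filter, Finset.card_filter, ← Finset.sum_add_distrib]
    have : A.card = ∑ j ∈ Finset.range (2*k), if j ∈ A then 1 else 0 := by
      rw [← Finset.card_filter]
      congr 1
      rw [Finset.filter_mem_eq_inter, Finset.inter_eq_right.mpr hA]
    rw [this]
    refine Finset.sum_congr rfl fun j _ => ?_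
    by_cases h1 : j ∈ A <;> by_cases h2 : j % 2 = 0 <;> simp [h1, h2]
  have hek : n00 + n10 = k := by
    rw [hn00, hn10, Finset.card_filter, Finset.card_filter, ← Finset.sum_add_distrib]
    have hsum : (∑ j ∈ Finset.range (2*k),
        ((if j ∈ A ∧ j % 2 = 0 then 1 else 0) + if ¬ (j ∈ A) ∧ j % 2 = 0 then 1 else 0))
        = ∑ j ∈ Finset.range (2*k), if j % 2 = 0 then 1 else 0 := by
      refine Finset.sum_congr rfl fun j _ => ?_
      by_cases h1 : j ∈ A <;> by_cases h2 : j % 2 = 0 <;> simp [h1, h2]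
    rw [hsum, ← Finset.card_filter, card_even_range]
  have card_odd : ((Finset.range (2*k)).filter (fun j => ¬ (j % 2 = 0))).card = k := by
    have h := Finset.card_filter_add_card_filter_not
      (s := Finset.range (2*k)) (p := fun j => j % 2 = 0)
    rw [card_even_range, Finset.card_range] at h
    omega
  have hok : n01 + n11 = k := by
    rw [hn01, hn11, Finset.card_filter, Finset.card_filter, ← Finset.sum_add_distrib]
    have hsum : (∑ j ∈ Finset.range (2*k),
        ((if j ∈ A ∧ ¬ (j % 2 = 0) then 1 else 0) + if ¬ (j ∈ A) ∧ ¬ (j % 2 = 0) then 1 else 0))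
        = ∑ j ∈ Finset.range (2*k), if ¬ (j % 2 = 0) then 1 else 0 := by
      refine Finset.sum_congr rfl fun j _ => ?_
      by_cases h1 : j ∈ A <;> by_cases h2 : j % 2 = 0 <;> simp [h1, h2]
    rw [hsum, ← Finset.card_filter, card_odd]
  -- final arithmetic
  have key : (q-1) * A.card = (q-1) * k := by
    calc (q-1) * A.card = (r + r') * (n00 + n01) := by rw [hrr', hcA]
      _ = (n00 * r + n01 * r') + (n01 * r + n00 * r') := by ring
      _ = (n10 * r' + n11 * r) + (n01 * r + n00 * r') := by rw [hdad]
      _ = (n00 + n10) * r' + (n01 + n11) * r := by ring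
      _ = k * r' + k * r := by rw [hek, hok]
      _ = (r + r') * k := by ring
      _ = (q-1) * k := by rw [hrr']
  have hAk : A.card = k := Nat.eq_of_mul_eq_mul_left (by omega) key
  rw [Finset.card_sdiff_of_subset hA, Finset.card_range, hAk]
  omega
end
end
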